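/- arXiv:0907.5125 — 4 statements merged into one kernel-verified Lean document; each statement's English description precedes it below -/
import Mathlib

section
/- The intersection of a context-free hedge automaton language with a hedge automaton language is a context-free hedge automaton language. -/
/-- Unranked terms over an alphabet `α`: a node labeled by a symbol of `α`
with a hedge (finite list) of subterms. -/
inductive UTerm (α : Type) : Type
  | node : α → List (UTerm α) → UTerm α

/-- A hedge automaton: transitions `a(L) → q` with `L ⊆ Q*` a regular word language. -/
structure HA (α Q : Type) where
  final : Set Q
  trans : List (α × Language Q × Q)
  regular : ∀ r ∈ trans, r.2.1.IsRegular

/-- Bottom-up reduction of a term to a state. -/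
inductive HA.Reduce {α Q : Type} (A : HA α Q) : UTerm α → Q → Prop
  | node {a : α} {ts : List (UTerm α)} {qs : List Q} {L : Language Q} {q : Q} :
      (a, L, q) ∈ A.trans → qs ∈ L → ts.length = qs.length →
      (∀ p ∈ List.zip ts qs, A.Reduce p.1 p.2) →
      A.Reduce (UTerm.node a ts) q

/-- Language of terms accepted by a hedge automaton. -/
def HA.lang {α Q : Type} (A : HA α Q) : Set (UTerm α) :=
  { t | ∃ q ∈ A.final, A.Reduce t q }

/-- A set of terms is a hedge-automaton language. -/
def IsHALang {α : Type} (L : Set (UTerm α)) : Prop :=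
  ∃ (Q : Type) (_ : Fintype Q) (A : HA α Q), A.lang = L

/-- A context-free hedge automaton: transitions `a(L) → q` with `L ⊆ Q*` context-free. -/
structure CFHA (α Q : Type) where
  final : Set Q
  trans : List (α × Language Q × Q)
  contextFree : ∀ r ∈ trans, r.2.1.IsContextFree

/-- Bottom-up reduction of a term to a state of a CF-HA. -/
inductive CFHA.Reduce {α Q : Type} (A : CFHA α Q) : UTerm α → Q → Prop
  | node {a : α} {ts : List (UTerm α)} {qs : List Q} {L : Language Q} {q : Q} :
      (a, L, q) ∈ A.trans → qs ∈ L → ts.length = qs.length →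
      (∀ p ∈ List.zip ts qs, A.Reduce p.1 p.2) →
      A.Reduce (UTerm.node a ts) q

/-- Language of terms accepted by a CF-HA. -/
def CFHA.lang {α Q : Type} (A : CFHA α Q) : Set (UTerm α) :=
  { t | ∃ q ∈ A.final, A.Reduce t q }

/-- A set of terms is a CF-HA language. -/
def IsCFHALang {α : Type} (L : Set (UTerm α)) : Prop :=
  ∃ (Q : Type) (_ : Fintype Q) (A : CFHA α Q), A.lang = L


open ContextFreeGrammar

namespace BarHillel

variable {Q₁ Q₂ S N : Type}

/-- Annotation relation: `Ann D v s s' u` means `u` is a version of the sentential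
form `v` where terminals have been paired with DFA letters and nonterminals annotated
with state pairs, forming a chain from `s` to `s'`. -/
inductive Ann (D : DFA Q₂ S) : List (Symbol Q₁ N) → S → S →
    List (Symbol (Q₁ × Q₂) (Option (S × N × S))) → Prop
  | nil (s : S) : Ann D [] s s []
  | term {v : List (Symbol Q₁ N)} {s s' : S} {u} (a : Q₁) (b : Q₂)
      (h : Ann D v (D.step s b) s' u) :
      Ann D (Symbol.terminal a :: v) s s' (Symbol.terminal (a, b) :: u)
  | nt {v : List (Symbol Q₁ N)} {s' : S} {u} (A : N) (s t : S)
      (h : Ann D v t s' u) :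
      Ann D (Symbol.nonterminal A :: v) s s' (Symbol.nonterminal (some (s, A, t)) :: u)

variable {D : DFA Q₂ S}

lemma Ann.append {v₁ v₂ : List (Symbol Q₁ N)} {s t s' : S} {u₁ u₂}
    (h₁ : Ann D v₁ s t u₁) (h₂ : Ann D v₂ t s' u₂) :
    Ann D (v₁ ++ v₂) s s' (u₁ ++ u₂) := by
  induction h₁ with
  | nil => simpa
  | term a b _ ih => exact Ann.term a b (ih h₂)
  | nt A s t _ ih => exact Ann.nt A s t (ih h₂)

lemma Ann.split_left {v₁ v₂ : List (Symbol Q₁ N)} {s s' : S} {u}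
    (h : Ann D (v₁ ++ v₂) s s' u) :
    ∃ t u₁ u₂, u = u₁ ++ u₂ ∧ Ann D v₁ s t u₁ ∧ Ann D v₂ t s' u₂ := by
  induction v₁ generalizing s u with
  | nil => exact ⟨s, [], u, rfl, Ann.nil s, h⟩
  | cons x v₁ ih =>
    cases h with
    | term a b h =>
      obtain ⟨t, u₁, u₂, rfl, hu₁, hu₂⟩ := ih h
      exact ⟨t, _ :: u₁, u₂, rfl, Ann.term a b hu₁, hu₂⟩
    | nt A s t h =>
      obtain ⟨t', u₁, u₂, rfl, hu₁, hu₂⟩ := ih h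
      exact ⟨t', _ :: u₁, u₂, rfl, Ann.nt A s t hu₁, hu₂⟩

lemma Ann.split_right {v : List (Symbol Q₁ N)} {s s' : S}
    {u₁ u₂ : List (Symbol (Q₁ × Q₂) (Option (S × N × S)))}
    (h : Ann D v s s' (u₁ ++ u₂)) :
    ∃ t v₁ v₂, v = v₁ ++ v₂ ∧ Ann D v₁ s t u₁ ∧ Ann D v₂ t s' u₂ := by
  induction u₁ generalizing v s with
  | nil => exact ⟨s, [], v, rfl, Ann.nil s, h⟩
  | cons x u₁ ih =>
    cases h with
    | term a b h =>
      obtain ⟨t, v₁, v₂, rfl, hv₁, hv₂⟩ := ih h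
      exact ⟨t, _ :: v₁, v₂, rfl, Ann.term a b hv₁, hv₂⟩
    | nt A s t h =>
      obtain ⟨t', v₁, v₂, rfl, hv₁, hv₂⟩ := ih h
      exact ⟨t', _ :: v₁, v₂, rfl, Ann.nt A s t hv₁, hv₂⟩

lemma Ann.singleton_nt_inv {v : List (Symbol Q₁ N)} {s s' s₀ s₁ : S} {A : N}
    (h : Ann D v s s' [Symbol.nonterminal (some (s₀, A, s₁))]) :
    v = [Symbol.nonterminal A] ∧ s = s₀ ∧ s' = s₁ := by
  cases h with
  | nt A s t h => cases h; exact ⟨rfl, rfl, rfl⟩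

lemma Ann.of_terminal (w : List (Q₁ × Q₂)) (s : S) :
    Ann (N := N) D (w.map (fun p => Symbol.terminal p.1)) s
      (D.evalFrom s (w.map Prod.snd)) (w.map Symbol.terminal) := by
  induction w generalizing s with
  | nil => exact Ann.nil s
  | cons p w ih => exact Ann.term p.1 p.2 (ih (D.step s p.2))

lemma Ann.terminal_inv {v : List (Symbol Q₁ N)} {s s' : S} {w : List (Q₁ × Q₂)}
    (h : Ann D v s s' (w.map Symbol.terminal)) :
    v = w.map (fun p => Symbol.terminal p.1) ∧ s' = D.evalFrom s (w.map Prod.snd) := by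
  induction w generalizing v s with
  | nil => cases h; exact ⟨rfl, rfl⟩
  | cons p w ih =>
    cases h with
    | term a b h =>
      obtain ⟨rfl, rfl⟩ := ih h
      exact ⟨rfl, rfl⟩

/-- The set of annotations of a fixed sentential form is finite. -/
lemma ann_finite [Fintype Q₂] [Fintype S] (v : List (Symbol Q₁ N)) (s : S) :
    {p : S × List (Symbol (Q₁ × Q₂) (Option (S × N × S))) | Ann D v s p.1 p.2}.Finite := by
  induction v generalizing s with
  | nil =>
    apply Set.Finite.subset (Set.finite_singleton (s, []))
    rintro ⟨s', u⟩ h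
    cases h; rfl
  | cons x v ih =>
    cases x with
    | terminal a =>
      apply Set.Finite.subset
        (Set.Finite.biUnion (Set.finite_univ (α := Q₂)) (fun b _ =>
          ((ih (D.step s b)).image (fun p => (p.1, Symbol.terminal (a, b) :: p.2)))))
      rintro ⟨s', u⟩ h
      cases h with
      | term a b h =>
        rename_i u'
        exact Set.mem_biUnion (Set.mem_univ b) ⟨(s', u'), h, rfl⟩
    | nonterminal A =>
      apply Set.Finite.subset
        (Set.Finite.biUnion (Set.finite_univ (α := S)) (fun t _ =>
          ((ih t).image (fun p => (p.1, Symbol.nonterminal (some (s, A, t)) :: p.2)))))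
      rintro ⟨s', u⟩ h
      cases h with
      | nt A s t h =>
        rename_i u'
        exact Set.mem_biUnion (Set.mem_univ t) ⟨(s', u'), h, rfl⟩


section Grammar

variable [Fintype Q₂] [Fintype S] (G : ContextFreeGrammar Q₁) (D : DFA Q₂ S)

/-- Rules of the product grammar. -/
def prodRuleSet : Set (ContextFreeRule (Q₁ × Q₂) (Option (S × G.NT × S))) :=
  {r' | ∃ s ∈ D.accept,
      r' = ⟨none, [Symbol.nonterminal (some (D.start, G.initial, s))]⟩} ∪
  {r' | ∃ r ∈ G.rules, ∃ s₀ s₁ u, Ann D r.output s₀ s₁ u ∧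
      r' = ⟨some (s₀, r.input, s₁), u⟩}

lemma prodRuleSet_finite : (prodRuleSet G D).Finite := by
  apply Set.Finite.union
  · apply Set.Finite.subset (Set.finite_range fun s : S =>
      (⟨none, [Symbol.nonterminal (some (D.start, G.initial, s))]⟩ :
        ContextFreeRule (Q₁ × Q₂) (Option (S × G.NT × S))))
    rintro r' ⟨s, -, rfl⟩
    exact ⟨s, rfl⟩
  · apply Set.Finite.subset
      (Set.Finite.biUnion G.rules.finite_toSet fun r _ =>
        Set.Finite.biUnion (Set.finite_univ (α := S)) fun s₀ _ =>
          (ann_finite (D := D) r.output s₀).image fun p =>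
            (⟨some (s₀, r.input, p.1), p.2⟩ :
              ContextFreeRule (Q₁ × Q₂) (Option (S × G.NT × S))))
    rintro r' ⟨r, hr, s₀, s₁, u, hann, rfl⟩
    exact Set.mem_biUnion hr (Set.mem_biUnion (Set.mem_univ s₀) ⟨(s₁, u), hann, rfl⟩)

/-- The product grammar recognizing the intersection. -/
noncomputable def prodGrammar : ContextFreeGrammar (Q₁ × Q₂) :=
  ⟨Option (S × G.NT × S), none, (prodRuleSet_finite G D).toFinset⟩

lemma mem_prodGrammar_rules {r' : ContextFreeRule (Q₁ × Q₂) (Option (S × G.NT × S))} :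
    r' ∈ (prodGrammar G D).rules ↔ r' ∈ prodRuleSet G D :=
  Set.Finite.mem_toFinset _

lemma sound_step {u u' : List (Symbol (Q₁ × Q₂) (Option (S × G.NT × S)))}
    {v : List (Symbol Q₁ G.NT)} {s s' : S}
    (h : (prodGrammar G D).Produces u u') (ha : Ann D v s s' u) :
    ∃ v', G.Derives v v' ∧ Ann D v' s s' u' := by
  obtain ⟨r', hr', hrw⟩ := h
  obtain ⟨p, q, hu, hu'⟩ := hrw.exists_parts
  subst hu hu'
  rw [List.append_assoc] at ha
  obtain ⟨t₁, v₁, v₂₃, rfl, h1, h23⟩ := Ann.split_right ha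
  obtain ⟨t₂, vm, v₃, rfl, hm, h3⟩ :=
    Ann.split_right (u₁ := [Symbol.nonterminal r'.input]) h23
  rcases (mem_prodGrammar_rules G D).mp hr' with ⟨sf, -, rfl⟩ | ⟨r, hr, s₀, s₁, w, hann, rfl⟩
  · exact absurd hm (by rintro ⟨⟩)
  · obtain ⟨rfl, rfl, rfl⟩ := Ann.singleton_nt_inv hm
    refine ⟨v₁ ++ r.output ++ v₃, ?_, ?_⟩
    · exact ContextFreeGrammar.Produces.single
        ⟨r, hr, by rw [← List.append_assoc]
                   exact ContextFreeRule.rewrites_of_exists_parts r v₁ v₃⟩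
    · rw [List.append_assoc, List.append_assoc]
      exact h1.append (hann.append h3)

lemma sound {u w : List (Symbol (Q₁ × Q₂) (Option (S × G.NT × S)))}
    {v : List (Symbol Q₁ G.NT)} {s s' : S}
    (h : (prodGrammar G D).Derives u w) (ha : Ann D v s s' u) :
    ∃ v', G.Derives v v' ∧ Ann D v' s s' w := by
  induction h with
  | refl => exact ⟨v, by rfl, ha⟩
  | tail _ hstep ih =>
    obtain ⟨v', hd, ha'⟩ := ih
    obtain ⟨v'', hd', ha''⟩ := sound_step G D hstep ha'
    exact ⟨v'', hd.trans hd', ha''⟩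

lemma complete {v : List (Symbol Q₁ G.NT)} {u : List Q₁}
    (h : G.Derives v (u.map Symbol.terminal)) :
    ∀ w : List (Q₁ × Q₂), w.map Prod.fst = u → ∀ s : S,
    ∃ u', Ann D v s (D.evalFrom s (w.map Prod.snd)) u' ∧
      (prodGrammar G D).Derives u' (w.map Symbol.terminal) := by
  induction h using Relation.ReflTransGen.head_induction_on with
  | refl =>
    rintro w rfl s
    refine ⟨w.map Symbol.terminal, ?_, by rfl⟩
    have := Ann.of_terminal (D := D) (N := G.NT) w s
    simpa [List.map_map, Function.comp_def] using this
  | head hstep _ ih =>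
    intro w hw s
    obtain ⟨r, hr, hrw⟩ := hstep
    obtain ⟨p, q, hv, hv'⟩ := hrw.exists_parts
    subst hv hv'
    obtain ⟨u'', ha, hd⟩ := ih w hw s
    rw [List.append_assoc] at ha
    obtain ⟨t₁, u₁, u₂₃, rfl, h1, h23⟩ := Ann.split_left ha
    obtain ⟨t₂, u₂, u₃, rfl, h2, h3⟩ := Ann.split_left h23
    refine ⟨u₁ ++ [Symbol.nonterminal (some (t₁, r.input, t₂))] ++ u₃, ?_, ?_⟩
    · rw [List.append_assoc, List.append_assoc]
      exact h1.append ((Ann.nt r.input t₁ t₂ (Ann.nil t₂)).append h3)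
    · have hrule : (⟨some (t₁, r.input, t₂), u₂⟩ :
          ContextFreeRule (Q₁ × Q₂) (Option (S × G.NT × S))) ∈ (prodGrammar G D).rules :=
        (mem_prodGrammar_rules G D).mpr (Or.inr ⟨r, hr, t₁, t₂, u₂, h2, rfl⟩)
      have hstep' : (prodGrammar G D).Produces
          (u₁ ++ [Symbol.nonterminal (some (t₁, r.input, t₂))] ++ u₃) (u₁ ++ u₂ ++ u₃) :=
        ⟨_, hrule, ContextFreeRule.rewrites_of_exists_parts _ u₁ u₃⟩
      exact hstep'.trans_derives (by rw [List.append_assoc]; exact hd)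

end Grammar

/-- Bar–Hillel: intersection of a context-free language with a regular language
(zipped into pairs) is context-free. -/
theorem inter_reg_isContextFree {Q₁ Q₂ : Type} [Fintype Q₂]
    {L : Language Q₁} {M : Language Q₂} (hL : L.IsContextFree) (hM : M.IsRegular) :
    Language.IsContextFree
      {w : List (Q₁ × Q₂) | w.map Prod.fst ∈ L ∧ w.map Prod.snd ∈ M} := by
  obtain ⟨G, rfl⟩ := hL
  obtain ⟨S, _, D, rfl⟩ := hM
  refine ⟨prodGrammar G D, ?_⟩
  ext w
  constructor
  · intro hw
    rcases ContextFreeGrammar.Derives.eq_or_head hw with heq | ⟨u, hstep, hd⟩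
    · cases w <;> simp [Symbol.nonterminal] at heq
    · obtain ⟨r', hr', hrw⟩ := hstep
      obtain ⟨p, q, hpq, hu⟩ := hrw.exists_parts
      have hlen := congrArg List.length hpq
      simp at hlen
      have hp : p = [] := List.eq_nil_of_length_eq_zero (by omega)
      have hq : q = [] := List.eq_nil_of_length_eq_zero (by omega)
      subst hp hq
      simp at hpq hu
      rcases (mem_prodGrammar_rules G D).mp hr' with ⟨sf, hsf, hr'eq⟩ |
        ⟨r, hrr, s₀, s₁, uu, hann, hr'eq⟩
      · subst hr'eq
        subst hu
        obtain ⟨v', hder, hann⟩ := sound G D hd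
          (Ann.nt G.initial D.start sf (Ann.nil sf))
        obtain ⟨rfl, hev⟩ := Ann.terminal_inv hann
        constructor
        · show G.Derives _ _
          simpa [List.map_map, Function.comp_def] using hder
        · rw [DFA.mem_accepts]
          show D.evalFrom D.start _ ∈ D.accept
          rw [← hev]
          exact hsf
      · rw [hr'eq] at hpq
        exact absurd hpq (by simp [prodGrammar])
  · rintro ⟨h1, h2⟩
    have h1' : G.Derives [Symbol.nonterminal G.initial]
        ((w.map Prod.fst).map Symbol.terminal) := h1
    obtain ⟨u', ha, hd⟩ := complete G D h1' w rfl D.start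
    cases ha with
    | nt A s t ha' =>
      cases ha'
      have hsf : D.evalFrom D.start (w.map Prod.snd) ∈ D.accept := by
        rw [DFA.mem_accepts] at h2; exact h2
      have hrule : (⟨none, [Symbol.nonterminal
          (some (D.start, G.initial, D.evalFrom D.start (w.map Prod.snd)))]⟩ :
          ContextFreeRule (Q₁ × Q₂) (Option (S × G.NT × S))) ∈ (prodGrammar G D).rules :=
        (mem_prodGrammar_rules G D).mpr (Or.inl ⟨_, hsf, rfl⟩)
      exact ContextFreeGrammar.Produces.trans_derives
        ⟨_, hrule, ContextFreeRule.Rewrites.input_output⟩ hd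

end BarHillel


lemma Language.zero_isContextFree {T : Type} : (0 : Language T).IsContextFree := by
  refine ⟨⟨Unit, (), ∅⟩, ?_⟩
  ext w
  simp only [ContextFreeGrammar.mem_language_iff]
  constructor
  · intro h
    rcases h.eq_or_head with heq | ⟨u, ⟨r, hr, -⟩, -⟩
    · cases w <;> simp at heq
    · simp at hr
  · intro h
    exact absurd h (Set.notMem_empty w)

namespace HedgeProd

variable {α Q₁ Q₂ : Type} [Fintype Q₁] [Fintype Q₂]

/-- intersection word language, guarded by equality of node letters. -/
def interLang (L : Language Q₁) (M : Language Q₂) (a b : α) : Language (Q₁ × Q₂) :=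
  {w | a = b ∧ w.map Prod.fst ∈ L ∧ w.map Prod.snd ∈ M}

variable (A₁ : CFHA α Q₁) (A₂ : HA α Q₂)

/-- the product CF-HA. -/
def prodCFHA : CFHA α (Q₁ × Q₂) where
  final := {p | p.1 ∈ A₁.final ∧ p.2 ∈ A₂.final}
  trans := A₁.trans.flatMap fun r₁ => A₂.trans.map fun r₂ =>
    (r₁.1, interLang r₁.2.1 r₂.2.1 r₁.1 r₂.1, (r₁.2.2, r₂.2.2))
  contextFree := by
    intro r hr
    simp only [List.mem_flatMap, List.mem_map] at hr
    obtain ⟨r₁, h₁, r₂, h₂, rfl⟩ := hr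
    by_cases h : r₁.1 = r₂.1
    · have he : interLang r₁.2.1 r₂.2.1 r₁.1 r₂.1 =
          {w : List (Q₁ × Q₂) | w.map Prod.fst ∈ r₁.2.1 ∧ w.map Prod.snd ∈ r₂.2.1} := by
        ext w; simp [interLang, h]
      show (interLang r₁.2.1 r₂.2.1 r₁.1 r₂.1).IsContextFree
      rw [he]
      exact BarHillel.inter_reg_isContextFree (A₁.contextFree r₁ h₁) (A₂.regular r₂ h₂)
    · have he : interLang r₁.2.1 r₂.2.1 r₁.1 r₂.1 = 0 := by
        ext w
        simp only [interLang, Set.mem_setOf_eq]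
        constructor
        · rintro ⟨hh, -⟩; exact absurd hh h
        · intro hh; exact absurd hh (Set.notMem_empty w)
      show (interLang r₁.2.1 r₂.2.1 r₁.1 r₂.1).IsContextFree
      rw [he]
      exact Language.zero_isContextFree

lemma prod_reduce {t : UTerm α} {q₁ : Q₁} (h₁ : A₁.Reduce t q₁) :
    ∀ q₂, A₂.Reduce t q₂ → (prodCFHA A₁ A₂).Reduce t (q₁, q₂) := by
  induction h₁ with
  | @node a ts qs L q hmem hqs hlen hch ih =>
    intro q₂ h₂
    cases h₂ with
    | @node _ _ qs₂ M _ hmem₂ hqs₂ hlen₂ hch₂ =>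
      refine CFHA.Reduce.node (qs := qs.zip qs₂) (L := interLang L M a a)
        ?_ ?_ ?_ ?_
      · simp only [prodCFHA, List.mem_flatMap, List.mem_map]
        exact ⟨(a, L, q), hmem, (a, M, q₂), hmem₂, rfl⟩
      · refine ⟨rfl, ?_, ?_⟩
        · rw [List.map_fst_zip (l₁ := qs) (l₂ := qs₂) (by omega)]; exact hqs
        · rw [List.map_snd_zip (l₁ := qs) (l₂ := qs₂) (by omega)]; exact hqs₂
      · rw [List.length_zip]; omega
      · intro p hp
        rw [List.mem_iff_getElem] at hp
        obtain ⟨i, hi, hpe⟩ := hp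
        simp only [List.length_zip] at hi
        rw [List.getElem_zip, List.getElem_zip] at hpe
        subst hpe
        refine ih (ts[i], qs[i]) ?_ qs₂[i] (hch₂ (ts[i], qs₂[i]) ?_)
        · rw [List.mem_iff_getElem]
          exact ⟨i, by simp [List.length_zip]; omega, by rw [List.getElem_zip]⟩
        · rw [List.mem_iff_getElem]
          exact ⟨i, by simp [List.length_zip]; omega, by rw [List.getElem_zip]⟩

lemma prod_reduce_inv {t : UTerm α} {p : Q₁ × Q₂}
    (h : (prodCFHA A₁ A₂).Reduce t p) : A₁.Reduce t p.1 ∧ A₂.Reduce t p.2 := by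
  induction h with
  | @node a ts qs K q hmem hqs hlen hch ih =>
    simp only [prodCFHA, List.mem_flatMap, List.mem_map] at hmem
    obtain ⟨r₁, h₁, r₂, h₂, heq⟩ := hmem
    obtain ⟨ha, hK, hq⟩ : r₁.1 = a ∧ interLang r₁.2.1 r₂.2.1 r₁.1 r₂.1 = K ∧
        (r₁.2.2, r₂.2.2) = q := by
      simpa [Prod.ext_iff] using heq
    subst ha
    subst hK
    subst hq
    obtain ⟨hab, hf, hs⟩ := hqs
    constructor
    · refine CFHA.Reduce.node (L := r₁.2.1) (qs := qs.map Prod.fst) h₁ hf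
        (by simpa using hlen) ?_
      intro p' hp'
      rw [List.mem_iff_getElem] at hp'
      obtain ⟨i, hi, hpe⟩ := hp'
      simp only [List.length_zip, List.length_map] at hi
      rw [List.getElem_zip, List.getElem_map] at hpe
      subst hpe
      refine (ih (ts[i], qs[i]) ?_).1
      rw [List.mem_iff_getElem]
      exact ⟨i, by simp [List.length_zip]; omega, by rw [List.getElem_zip]⟩
    · have h₂' : (r₁.1, r₂.2.1, r₂.2.2) ∈ A₂.trans := by rw [hab]; exact h₂
      refine HA.Reduce.node (L := r₂.2.1) (qs := qs.map Prod.snd) h₂' hs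
        (by simpa using hlen) ?_
      intro p' hp'
      rw [List.mem_iff_getElem] at hp'
      obtain ⟨i, hi, hpe⟩ := hp'
      simp only [List.length_zip, List.length_map] at hi
      rw [List.getElem_zip, List.getElem_map] at hpe
      subst hpe
      refine (ih (ts[i], qs[i]) ?_).2
      rw [List.mem_iff_getElem]
      exact ⟨i, by simp [List.length_zip]; omega, by rw [List.getElem_zip]⟩

lemma prod_lang : (prodCFHA A₁ A₂).lang = A₁.lang ∩ A₂.lang := by
  ext t
  constructor
  · rintro ⟨⟨q₁, q₂⟩, ⟨hf₁, hf₂⟩, hred⟩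
    obtain ⟨h1, h2⟩ := prod_reduce_inv A₁ A₂ hred
    exact ⟨⟨q₁, hf₁, h1⟩, ⟨q₂, hf₂, h2⟩⟩
  · rintro ⟨⟨q₁, hf₁, h1⟩, ⟨q₂, hf₂, h2⟩⟩
    exact ⟨(q₁, q₂), ⟨hf₁, hf₂⟩, prod_reduce A₁ A₂ h1 q₂ h2⟩

end HedgeProd

/-- the intersection of a CF-HA language with an HA language
is a CF-HA language. -/
theorem cfha_inter_ha_isCFHALang {α : Type} [Fintype α]
    {L₁ L₂ : Set (UTerm α)} (h₁ : IsCFHALang L₁) (h₂ : IsHALang L₂) :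
    IsCFHALang (L₁ ∩ L₂) := by
  obtain ⟨Q₁, i₁, A₁, rfl⟩ := h₁
  obtain ⟨Q₂, i₂, A₂, rfl⟩ := h₂
  exact ⟨Q₁ × Q₂, instFintypeProd Q₁ Q₂, HedgeProd.prodCFHA A₁ A₂,
    HedgeProd.prod_lang A₁ A₂⟩
end

section
/- Let Σ = {a,b,c,c'} and let R be the (unparametrized) rewrite system with the two rules c(x) → c'(a x) and c'(x) → c(x b), where rewriting applies at any position in an unranked term and x matches the hedge of children. Then the set of terms over {a,b,c} reachable from the single-node term c by R-rewriting is exactly {c(aⁿbⁿ) | n ≥ 0}, and hence post*_R({c}) ∩ T({a,b,c}) is not a hedge-automaton language. -/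
/-- The alphabet `{a, b, c, c'}` as `Fin 4` with `a = 0`, `b = 1`, `c = 2`, `c' = 3`.
One-step rewriting by the rules `c(x) → c'(a x)` and `c'(x) → c(x b)`,
applied at an arbitrary position. -/
inductive Step7 : List (UTerm (Fin 4)) → List (UTerm (Fin 4)) → Prop
  | rule1 (h : List (UTerm (Fin 4))) :
      Step7 [UTerm.node 2 h] [UTerm.node 3 (UTerm.node 0 [] :: h)]
  | rule2 (h : List (UTerm (Fin 4))) :
      Step7 [UTerm.node 3 h] [UTerm.node 2 (h ++ [UTerm.node 1 []])]
  | context {u v h h'} : Step7 h h' → Step7 (u ++ h ++ v) (u ++ h' ++ v)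
  | under {f h h'} : Step7 h h' → Step7 [UTerm.node f h] [UTerm.node f h']

/-- A term over `{a,b,c}`, i.e. with no occurrence of `c'`. -/
inductive NoC' : UTerm (Fin 4) → Prop
  | node {f : Fin 4} {ts : List (UTerm (Fin 4))} :
      f ≠ 3 → (∀ t ∈ ts, NoC' t) → NoC' (UTerm.node f ts)

/-- The term `c(aⁿbⁿ)`. -/
def cab (n : ℕ) : UTerm (Fin 4) :=
  UTerm.node 2
    (List.replicate n (UTerm.node 0 []) ++ List.replicate n (UTerm.node 1 []))

def aT : UTerm (Fin 4) := UTerm.node 0 []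
def bT : UTerm (Fin 4) := UTerm.node 1 []

def cab' (n : ℕ) : UTerm (Fin 4) :=
  UTerm.node 3 (List.replicate (n+1) aT ++ List.replicate n bT)

lemma step_ne_nil {h h' : List (UTerm (Fin 4))} (s : Step7 h h') : h ≠ [] := by
  induction s with
  | rule1 => simp
  | rule2 => simp
  | context s ih => simp_all [List.append_eq_nil_iff]
  | under => simp

lemma step_single : ∀ {g l : List (UTerm (Fin 4))}, Step7 g l → ∀ t, g = [t] →
    (∃ h, t = UTerm.node 2 h ∧ l = [UTerm.node 3 (UTerm.node 0 [] :: h)]) ∨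
    (∃ h, t = UTerm.node 3 h ∧ l = [UTerm.node 2 (h ++ [UTerm.node 1 []])]) ∨
    (∃ f h h', t = UTerm.node f h ∧ l = [UTerm.node f h'] ∧ Step7 h h') := by
  intro g l s
  induction s with
  | rule1 h => intro t ht; left; exact ⟨h, by simpa using ht.symm, rfl⟩
  | rule2 h => intro t ht; right; left; exact ⟨h, by simpa using ht.symm, rfl⟩
  | context s ih =>
    rename_i u v h h'
    intro t ht
    have hne := step_ne_nil s
    cases u with
    | cons x u0 =>
        exfalso
        simp only [List.cons_append, List.append_assoc, List.cons.injEq] at ht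
        exact hne (List.append_eq_nil_iff.mp (List.append_eq_nil_iff.mp ht.2).2).1
    | nil =>
        simp only [List.nil_append] at ht ⊢
        cases h with
        | nil => exact absurd rfl hne
        | cons x h0 =>
            simp only [List.cons_append, List.cons.injEq] at ht
            obtain ⟨rfl, h2⟩ := ht
            obtain ⟨rfl, rfl⟩ : h0 = [] ∧ v = [] := List.append_eq_nil_iff.mp h2
            simpa using ih _ rfl
  | under s ih =>
    rename_i f h h'
    intro t ht
    right; right
    exact ⟨f, h, h', by simpa using ht.symm, rfl, s⟩

lemma no_step_leaves : ∀ {h h' : List (UTerm (Fin 4))}, Step7 h h' →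
    (∀ t ∈ h, t = aT ∨ t = bT) → False := by
  intro h h' s
  induction s with
  | rule1 h => intro hl; rcases hl (UTerm.node 2 h) (by simp) with h1 | h1 <;> simp [aT, bT] at h1
  | rule2 h => intro hl; rcases hl (UTerm.node 3 h) (by simp) with h1 | h1 <;> simp [aT, bT] at h1
  | context s ih =>
    intro hl; exact ih fun t ht => hl t (by simp [ht])
  | under s ih =>
    rename_i f h0 h0'
    intro hl
    rcases hl (UTerm.node f h0) (by simp) with h1 | h1 <;>
      · simp only [aT, bT, UTerm.node.injEq] at h1
        exact step_ne_nil s h1.2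

def Good (t : UTerm (Fin 4)) : Prop := (∃ n, t = cab n) ∨ (∃ n, t = cab' n)

lemma children_leaves (n m : ℕ) :
    ∀ t ∈ List.replicate n aT ++ List.replicate m bT, t = aT ∨ t = bT := by
  intro t ht
  rcases List.mem_append.mp ht with h | h
  · exact Or.inl (List.eq_of_mem_replicate h)
  · exact Or.inr (List.eq_of_mem_replicate h)

lemma good_step {t t' : UTerm (Fin 4)} (hg : Good t) (s : Step7 [t] [t']) : Good t' := by
  rcases step_single s t rfl with ⟨h, rfl, hl⟩ | ⟨h, rfl, hl⟩ | ⟨f, h, h', heq, hl, sh⟩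
  · rcases hg with ⟨n, hn⟩ | ⟨n, hn⟩
    · simp only [cab, UTerm.node.injEq, true_and] at hn
      simp only [List.cons.injEq] at hl
      right; exact ⟨n, by simp [cab', aT, bT, List.replicate_succ, hl.1, hn]⟩
    · exact absurd hn (by simp [cab'])
  · rcases hg with ⟨n, hn⟩ | ⟨n, hn⟩
    · exact absurd hn (by simp [cab])
    · simp only [cab', UTerm.node.injEq, true_and] at hn
      simp only [List.cons.injEq] at hl
      left; exact ⟨n+1, by simp [cab, aT, bT, List.replicate_succ', hl.1, hn,
        List.append_assoc]⟩
  · exfalso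
    rcases hg with ⟨n, hn⟩ | ⟨n, hn⟩
    · rw [heq] at hn
      simp only [cab, UTerm.node.injEq] at hn
      exact no_step_leaves sh (hn.2 ▸ children_leaves n n)
    · rw [heq] at hn
      simp only [cab', UTerm.node.injEq] at hn
      exact no_step_leaves sh (hn.2 ▸ children_leaves (n+1) n)

lemma reach_good {t : UTerm (Fin 4)}
    (h : Relation.ReflTransGen (fun x y => Step7 [x] [y]) (UTerm.node 2 []) t) : Good t := by
  induction h with
  | refl => exact Or.inl ⟨0, by simp [cab]⟩
  | tail _ s ih => exact good_step ih s

lemma noC'_cab (n : ℕ) : NoC' (cab n) := by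
  refine NoC'.node (by decide) ?_
  intro t ht
  rcases children_leaves n n t ht with rfl | rfl
  · exact NoC'.node (by decide) (by simp)
  · exact NoC'.node (by decide) (by simp)

lemma reach_cab (n : ℕ) :
    Relation.ReflTransGen (fun x y => Step7 [x] [y]) (UTerm.node 2 []) (cab n) := by
  induction n with
  | zero =>
      have h0 : cab 0 = UTerm.node 2 [] := by simp [cab]
      rw [h0]
  | succ n ih =>
      have s1 : Step7 [cab n] [cab' n] := by
        have h1 : cab' n = UTerm.node 3 (UTerm.node 0 [] ::
            (List.replicate n (UTerm.node 0 []) ++ List.replicate n (UTerm.node 1 []))) := by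
          simp [cab', aT, bT, List.replicate_succ]
        rw [cab, h1]; exact Step7.rule1 _
      have s2 : Step7 [cab' n] [cab (n+1)] := by
        have h2 : cab (n+1) = UTerm.node 2 ((List.replicate (n+1) aT ++ List.replicate n bT)
            ++ [UTerm.node 1 []]) := by
          simp [cab, aT, bT, List.replicate_succ', List.append_assoc]
        rw [cab', h2]; exact Step7.rule2 _
      exact (ih.tail s1).tail s2

lemma set_eq :
    { t : UTerm (Fin 4) |
        Relation.ReflTransGen (fun x y => Step7 [x] [y]) (UTerm.node 2 []) t ∧ NoC' t } =
      { t : UTerm (Fin 4) | ∃ n : ℕ, t = cab n } := by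
  ext t
  constructor
  · rintro ⟨hr, hn⟩
    rcases reach_good hr with ⟨n, rfl⟩ | ⟨n, rfl⟩
    · exact ⟨n, rfl⟩
    · exfalso
      rw [cab'] at hn
      cases hn with
      | node h3 _ => exact h3 rfl
  · rintro ⟨n, rfl⟩
    exact ⟨reach_cab n, noC'_cab n⟩

def isB : UTerm (Fin 4) → Bool := fun t =>
  match t with
  | UTerm.node f l => decide (f = 1) && l.isEmpty

lemma countP_isB_aT (n : ℕ) : (List.replicate n aT).countP isB = 0 :=
  List.countP_eq_zero.mpr fun t ht => by
    rw [List.eq_of_mem_replicate ht]; simp [isB, aT]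

lemma countP_isB_bT (n : ℕ) : (List.replicate n bT).countP isB = n := by
  induction n with
  | zero => simp
  | succ n ih => rw [List.replicate_succ, List.countP_cons, ih]; simp [isB, bT]

lemma not_HA : ¬ IsHALang { t : UTerm (Fin 4) | ∃ n : ℕ, t = cab n } := by
  rintro ⟨Q, _, A, hA⟩
  set chn : ℕ → List (UTerm (Fin 4)) :=
    fun n => List.replicate n aT ++ List.replicate n bT with hchn
  have hcabchn : ∀ n, cab n = UTerm.node 2 (chn n) := by
    intro n; simp [cab, chn, aT, bT]
  have hmem : ∀ n : ℕ, ∃ i : Fin A.trans.length, ∃ L : Language Q, ∃ q : Q, ∃ qs : List Q,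
      A.trans.get i = ((2 : Fin 4), L, q) ∧ q ∈ A.final ∧ qs ∈ L ∧
      (chn n).length = qs.length ∧ ∀ p ∈ List.zip (chn n) qs, A.Reduce p.1 p.2 := by
    intro n
    have hm : cab n ∈ A.lang := by rw [hA]; exact ⟨n, rfl⟩
    obtain ⟨q, hq, hr⟩ := hm
    rw [hcabchn] at hr
    cases hr with
    | node htr hqs hl hrd =>
      rename_i qs L
      obtain ⟨i, hi⟩ := List.mem_iff_get.mp htr
      exact ⟨i, L, q, qs, hi, hq, hqs, hl, hrd⟩
  choose f L q qs hget hfin hqsL hlen hred using hmem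
  obtain ⟨i0, hi0⟩ := Finite.exists_infinite_fiber f
  rw [Set.infinite_coe_iff] at hi0
  obtain ⟨σ, _, M, hM⟩ := A.regular _ (List.get_mem A.trans i0)
  obtain ⟨n, hn, hlt⟩ := hi0.exists_gt (Fintype.card σ)
  have hfn : f n = i0 := hn
  have hgi : A.trans.get i0 = ((2 : Fin 4), L n, q n) := by rw [← hfn]; exact hget n
  have hMn : M.accepts = L n := by rw [hM, hgi]
  have hlchn : (chn n).length = n + n := by simp [chn]
  have hqlen : (qs n).length = n + n := by rw [← hlen n, hlchn]
  obtain ⟨x, y, z, hxyz, hxy, hyne, hpump⟩ :=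
    M.pumping_lemma (x := qs n) (by rw [hMn]; exact hqsL n) (by omega)
  -- the pumped word
  have hyy : y ++ y ∈ KStar.kstar ({y} : Language Q) := by
    have : ([y, y] : List (List Q)).flatten = y ++ y := by simp
    rw [← this]
    exact Language.join_mem_kstar (by
      intro w hw
      simp only [List.mem_cons, List.not_mem_nil, or_false] at hw
      rcases hw with rfl | rfl <;> rfl)
  have hw' : x ++ y ++ y ++ z ∈ L n := by
    have hmem' : x ++ (y ++ y) ++ z ∈ M.accepts := by
      apply hpump
      exact Language.mem_mul.mpr ⟨x ++ (y ++ y),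
        Language.mem_mul.mpr ⟨x, rfl, y ++ y, hyy, rfl⟩, z, rfl, rfl⟩
    have heq : x ++ (y ++ y) ++ z = x ++ y ++ y ++ z := by simp [List.append_assoc]
    rw [← heq, ← hMn]; exact hmem'
  -- split the children
  set ts := chn n with hts
  have htslen : ts.length = n + n := hlchn
  have hqeqlen : ts.length = x.length + y.length + z.length := by
    rw [htslen, ← hqlen, hxyz]; simp [List.length_append] <;> omega
  set tx := ts.take x.length with htx
  set tyz := ts.drop x.length with htyz
  set ty := tyz.take y.length with hty
  set tz := tyz.drop y.length with htz
  have hlx : tx.length = x.length := by simp [htx]; omega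
  have hlyz : tyz.length = y.length + z.length := by simp [htyz]; omega
  have hly : ty.length = y.length := by simp [hty, hlyz]
  have hlz : tz.length = z.length := by simp [htz, hlyz]
  have hsplit : ts = tx ++ ty ++ tz := by
    rw [List.append_assoc, hty, htz, List.take_append_drop, htx, htyz,
      List.take_append_drop]
  -- ty and tx consist only of a's
  have htakeA : tx ++ ty = List.replicate (x.length + y.length) aT := by
    have h1 : tx ++ ty = ts.take (x.length + y.length) := by
      rw [htx, hty, htyz, ← List.take_add]
    rw [h1, hts, hchn]
    rw [List.take_append_of_le_length (by simp; omega), List.take_replicate]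
    congr 1
    omega
  have hcount0 : (tx ++ ty).countP isB = 0 := by rw [htakeA]; exact countP_isB_aT _
  have hcx : tx.countP isB = 0 := by
    have := hcount0; rw [List.countP_append] at this; omega
  have hcy : ty.countP isB = 0 := by
    have := hcount0; rw [List.countP_append] at this; omega
  have hcts : ts.countP isB = n := by
    rw [hts, hchn, List.countP_append, countP_isB_aT, countP_isB_bT]; omega
  have hcz : tz.countP isB = n := by
    rw [hsplit] at hcts
    simp only [List.countP_append] at hcts
    omega
  -- the pumped term
  set ts' := tx ++ ty ++ ty ++ tz with hts'
  have hzipsub : ∀ p ∈ List.zip ts' (x ++ y ++ y ++ z), p ∈ List.zip ts (qs n) := by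
    have e1 : List.zip ts' (x ++ y ++ y ++ z) =
        List.zip tx x ++ List.zip ty y ++ List.zip ty y ++ List.zip tz z := by
      rw [hts', List.zip_append (by simp [hlx, hly] <;> omega)]
      rw [List.zip_append (by simp [hlx, hly] <;> omega), List.zip_append hlx]
    have e2 : List.zip ts (qs n) =
        List.zip tx x ++ List.zip ty y ++ List.zip tz z := by
      rw [hsplit, hxyz, List.zip_append (by simp [hlx, hly] <;> omega),
        List.zip_append hlx]
    intro p hp
    rw [e1] at hp; rw [e2]
    simp only [List.mem_append] at hp ⊢
    tauto
  have hlen' : ts'.length = (x ++ y ++ y ++ z).length := by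
    simp [hts', hlx, hly, hlz] <;> omega
  have hred' : A.Reduce (UTerm.node 2 ts') (q n) := by
    refine HA.Reduce.node ?_ hw' hlen' ?_
    · rw [← hgi]; exact List.get_mem A.trans i0
    · intro p hp; exact hred n p (hzipsub p hp)
  have hacc : UTerm.node 2 ts' ∈ A.lang := ⟨q n, hfin n, hred'⟩
  rw [hA] at hacc
  obtain ⟨m, hm⟩ := hacc
  rw [hcabchn] at hm
  have hts'eq : ts' = chn m := by
    simpa [UTerm.node.injEq] using hm
  -- count b's: m = n
  have hcount' : ts'.countP isB = n := by
    rw [hts']; simp only [List.countP_append]; omega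
  have hcm : (chn m).countP isB = m := by
    rw [hchn]; rw [List.countP_append, countP_isB_aT, countP_isB_bT]; omega
  have hmn : m = n := by rw [← hcm, ← hts'eq, hcount']
  -- lengths force y = []
  have hlen2 : ts'.length = n + n + y.length := by
    simp only [hts', List.length_append]
    rw [hlx, hly, hlz]; omega
  have hlenm : (chn m).length = m + m := by simp [chn]
  rw [hts'eq, hlenm, hmn] at hlen2
  have : y.length = 0 := by omega
  exact hyne (List.eq_nil_of_length_eq_zero this)

/-- the set of terms over `{a,b,c}` reachable from the term `c` by
the rules `c(x) → c'(a x)`, `c'(x) → c(x b)` is exactly `{c(aⁿbⁿ) | n ≥ 0}`,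
hence `post*({c}) ∩ T({a,b,c})` is not a hedge-automaton language. -/

theorem post_star_c_inter_abc :
    { t : UTerm (Fin 4) |
        Relation.ReflTransGen (fun x y => Step7 [x] [y]) (UTerm.node 2 []) t ∧
          NoC' t } =
      { t : UTerm (Fin 4) | ∃ n : ℕ, t = cab n } ∧
    ¬ IsHALang { t : UTerm (Fin 4) |
        Relation.ReflTransGen (fun x y => Step7 [x] [y]) (UTerm.node 2 []) t ∧
          NoC' t } := by
  refine ⟨set_eq, ?_⟩
  rw [set_eq]
  exact not_HA
end

section
/- Let Σ = {a,b,c}, let R consist of the single vertical-deletion rule c(x) → x (replacing a c-labeled node by the hedge of its children), and let L be the set of all nested terms c(a c(a … c … b) b), i.e. the language of the HA with rules a → q_a, b → q_b, c(ε ∪ q_a q q_b) → q. Then post*_R(L) ∩ { c(w) | w ∈ {a,b}* } = { c(aⁿbⁿ) | n ≥ 0 }, and consequently post*_R(L) is not a hedge-automaton language. -/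
/-- The alphabet `{a, b, c}` as `Fin 3` with `a = 0`, `b = 1`, `c = 2`.
One-step rewriting by the single vertical-deletion rule `c(x) → x`
(splicing the children of a `c`-node into the surrounding hedge),
applied at an arbitrary position. -/
inductive Step8 : List (UTerm (Fin 3)) → List (UTerm (Fin 3)) → Prop
  | rule (h : List (UTerm (Fin 3))) : Step8 [UTerm.node 2 h] h
  | context {u v h h'} : Step8 h h' → Step8 (u ++ h ++ v) (u ++ h' ++ v)
  | under {f h h'} : Step8 h h' → Step8 [UTerm.node f h] [UTerm.node f h']

/-- The nested terms `c(a c(a … c … b) b)`: the language of the HA with rules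
`a → q_a`, `b → q_b`, `c(ε ∪ q_a q q_b) → q`. -/
inductive Nested : UTerm (Fin 3) → Prop
  | base : Nested (UTerm.node 2 [])
  | step {t : UTerm (Fin 3)} :
      Nested t → Nested (UTerm.node 2 [UTerm.node 0 [], t, UTerm.node 1 []])

/-- `post*` of the nested language under `c(x) → x`, at the level of terms. -/
def Post8 : Set (UTerm (Fin 3)) :=
  { u | ∃ t, Nested t ∧ Relation.ReflTransGen (fun x y => Step8 [x] [y]) t u }

namespace Aux8

abbrev ta : UTerm (Fin 3) := UTerm.node 0 []
abbrev tb : UTerm (Fin 3) := UTerm.node 1 []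

/-- Balanced hedges: the invariant preserved by the rewriting. -/
inductive Bal : List (UTerm (Fin 3)) → Prop
  | nil : Bal []
  | csing {h} : Bal h → Bal [UTerm.node 2 h]
  | wrap {h} : Bal h → Bal (ta :: (h ++ [tb]))

lemma rep_spread {α : Type*} (x x' : α) (i : ℕ) (m : List α) :
    List.replicate (i+1) x ++ m ++ List.replicate (i+1) x' =
      x :: ((List.replicate i x ++ m ++ List.replicate i x') ++ [x']) := by
  rw [List.replicate_succ, List.replicate_succ' (n := i)]; simp

lemma bal_of_shape {m : List (UTerm (Fin 3))} (hm : Bal m) :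
    ∀ i, Bal (List.replicate i ta ++ m ++ List.replicate i tb) := by
  intro i; induction i with
  | zero => simpa using hm
  | succ i ih => rw [rep_spread]; exact Bal.wrap ih

lemma bal_shape {w : List (UTerm (Fin 3))} (hw : Bal w) :
    ∃ i m, w = List.replicate i ta ++ m ++ List.replicate i tb ∧
      (m = [] ∨ ∃ g, m = [UTerm.node 2 g] ∧ Bal g) := by
  induction hw with
  | nil => exact ⟨0, [], by simp, Or.inl rfl⟩
  | csing hb _ => exact ⟨0, _, by simp, Or.inr ⟨_, rfl, hb⟩⟩
  | @wrap h hb ih =>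
      obtain ⟨i, m, rfl, hm⟩ := ih
      exact ⟨i + 1, m, by rw [rep_spread], hm⟩

lemma step_ne_nil {h h' : List (UTerm (Fin 3))} (hs : Step8 h h') : h ≠ [] := by
  induction hs with
  | rule => simp
  | context _ ih => simp_all
  | under => simp

lemma middle_eq {x y : UTerm (Fin 3)} {u v : List (UTerm (Fin 3))} {i : ℕ}
    (hx0 : x ≠ ta) (hx1 : x ≠ tb)
    (h : u ++ x :: v = List.replicate i ta ++ y :: List.replicate i tb) :
    u = List.replicate i ta ∧ x = y ∧ v = List.replicate i tb := by
  have hlen := congrArg List.length h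
  simp at hlen
  have hui : u.length = i := by
    by_contra hne
    rcases Nat.lt_or_ge u.length i with hlt | hge
    · have h1 : (u ++ x :: v)[u.length]'(by simp) = x := by
        rw [List.getElem_append_right (le_refl _)]; simp
      have h2 : (List.replicate i ta ++ y :: List.replicate i tb)[u.length]'(by simp; omega)
          = ta := by
        rw [List.getElem_append_left (by simpa using hlt)]; simp
      have h3 := List.getElem_of_eq h (i := u.length) (by simp)
      exact hx0 ((h1.symm.trans h3).trans h2)
    · have hgt : i < u.length := lt_of_le_of_ne hge (Ne.symm hne)
      have h1 : (u ++ x :: v)[u.length]'(by simp) = x := by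
        rw [List.getElem_append_right (le_refl _)]; simp
      have e : List.replicate i ta ++ y :: List.replicate i tb =
          (List.replicate i ta ++ [y]) ++ List.replicate i tb := by simp
      have h2 : (List.replicate i ta ++ y :: List.replicate i tb)[u.length]'(by simp; omega)
          = tb := by
        rw [List.getElem_of_eq e, List.getElem_append_right (by simp; omega)]; simp
      have h3 := List.getElem_of_eq h (i := u.length) (by simp)
      exact hx1 ((h1.symm.trans h3).trans h2)
  obtain ⟨hu, hxy⟩ := List.append_inj h (by simpa using hui)
  injection hxy with h1 h2
  exact ⟨hu, h1, h2⟩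

lemma bal_middle {w u v h} {f : Fin 3} (hw : Bal w)
    (heq : w = u ++ UTerm.node f h :: v) (hne : h ≠ []) :
    ∃ i, u = List.replicate i ta ∧ v = List.replicate i tb ∧ f = 2 ∧ Bal h := by
  obtain ⟨i, m, rfl, hm⟩ := bal_shape hw
  rcases hm with rfl | ⟨g, rfl, hg⟩
  · exfalso
    have hmem : UTerm.node f h ∈ List.replicate i ta ++ ([] : List (UTerm (Fin 3)))
        ++ List.replicate i tb := by rw [heq]; simp
    simp only [List.mem_append, List.mem_replicate, List.not_mem_nil, or_false] at hmem
    rcases hmem with ⟨-, hh⟩ | ⟨-, hh⟩ <;> simp_all [UTerm.node.injEq]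
  · have heq' : u ++ UTerm.node f h :: v =
        List.replicate i ta ++ UTerm.node 2 g :: List.replicate i tb := by
      simpa using heq.symm
    obtain ⟨hu, hxy, hv⟩ := middle_eq (x := UTerm.node f h) (y := UTerm.node 2 g)
      (by intro hc; injection hc; simp_all) (by intro hc; injection hc; simp_all) heq'
    injection hxy with h1 h2
    exact ⟨i, hu, hv, h1, h2 ▸ hg⟩

lemma bal_preserved {w w'} (hs : Step8 w w') :
    ∀ u v, Bal (u ++ w ++ v) → Bal (u ++ w' ++ v) := by
  induction hs with
  | rule h =>
      intro u v hb
      obtain ⟨i, m, heq, hm⟩ := bal_shape hb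
      rcases hm with rfl | ⟨g, rfl, hg⟩
      · exfalso
        have hmem : UTerm.node 2 h ∈ List.replicate i ta ++ ([] : List (UTerm (Fin 3)))
            ++ List.replicate i tb := by rw [← heq]; simp
        simp only [List.mem_append, List.mem_replicate, List.not_mem_nil, or_false] at hmem
        rcases hmem with ⟨-, hh⟩ | ⟨-, hh⟩ <;> simp_all [UTerm.node.injEq]
      · have heq' : u ++ UTerm.node 2 h :: v =
            List.replicate i ta ++ UTerm.node 2 g :: List.replicate i tb := by
          simpa using heq
        obtain ⟨hu, hxy, hv⟩ := middle_eq (x := UTerm.node 2 h) (y := UTerm.node 2 g)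
          (by intro hc; injection hc; simp_all) (by intro hc; injection hc; simp_all) heq'
        injection hxy with h1 h2
        subst hu hv h2
        exact bal_of_shape hg i
  | @context u' v' h h' _ ih =>
      intro u v hb
      have e1 : u ++ (u' ++ h ++ v') ++ v = (u ++ u') ++ h ++ (v' ++ v) := by simp
      have e2 : u ++ (u' ++ h' ++ v') ++ v = (u ++ u') ++ h' ++ (v' ++ v) := by simp
      rw [e2]; rw [e1] at hb; exact ih _ _ hb
  | @under f h h' hstep ih =>
      intro u v hb
      obtain ⟨i, hu, hv, hf, hbal⟩ :=
        bal_middle (u := u) (v := v) (f := f) (h := h) hb (by simp) (step_ne_nil hstep)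
      subst hu hv hf
      have hb' : Bal h' := by simpa using ih [] [] (by simpa using hbal)
      simpa using bal_of_shape (Bal.csing hb') i


lemma nested_bal {t} (h : Nested t) : Bal [t] := by
  induction h with
  | base => exact Bal.csing Bal.nil
  | @step t _ ih =>
      have e : (ta :: ([t] ++ [tb]) : List (UTerm (Fin 3))) =
          [UTerm.node 0 [], t, UTerm.node 1 []] := by simp
      exact Bal.csing (e ▸ Bal.wrap ih)

lemma post_bal {t} (h : t ∈ Post8) : Bal [t] := by
  obtain ⟨t0, hn, hr⟩ := h
  induction hr with
  | refl => exact nested_bal hn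
  | tail _ hstep ih =>
      simpa using bal_preserved hstep [] [] (by simpa using ih)

lemma bal_children {ts} (h : Bal [UTerm.node 2 ts]) : Bal ts := by
  obtain ⟨i, m, heq, hm⟩ := bal_shape h
  cases i with
  | zero =>
      rcases hm with rfl | ⟨g, rfl, hg⟩
      · simp at heq
      · simp at heq
        exact heq ▸ hg
  | succ i =>
      rw [List.replicate_succ] at heq
      simp at heq

/-- forward: a Post8 term with a/b children is aⁿbⁿ. -/
lemma bal_ab {ts : List (UTerm (Fin 3))} (hb : Bal ts)
    (hab : ∀ s ∈ ts, s = ta ∨ s = tb) :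
    ∃ n, ts = List.replicate n ta ++ List.replicate n tb := by
  obtain ⟨i, m, rfl, hm⟩ := bal_shape hb
  rcases hm with rfl | ⟨g, rfl, hg⟩
  · exact ⟨i, by simp⟩
  · exfalso
    have : (UTerm.node 2 g : UTerm (Fin 3)) ∈
        List.replicate i ta ++ [UTerm.node 2 g] ++ List.replicate i tb := by simp
    rcases hab _ this with hc | hc <;> (injection hc; simp_all)

/-- backward: c(aⁿbⁿ) is reachable. -/
lemma reach (n : ℕ) : UTerm.node 2 (List.replicate n ta ++ List.replicate n tb) ∈ Post8 := by
  induction n with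
  | zero => exact ⟨UTerm.node 2 [], Nested.base, by simpa using Relation.ReflTransGen.refl⟩
  | succ n ih =>
      obtain ⟨t0, hn, hr⟩ := ih
      refine ⟨UTerm.node 2 [ta, t0, tb], Nested.step hn, ?_⟩
      have lift : Relation.ReflTransGen (fun x y => Step8 [x] [y])
          (UTerm.node 2 [ta, t0, tb])
          (UTerm.node 2 [ta, UTerm.node 2 (List.replicate n ta ++ List.replicate n tb), tb]) := by
        refine Relation.ReflTransGen.lift (fun x => UTerm.node 2 [ta, x, tb]) ?_ _ _ hr
        intro a b hab
        show Step8 [UTerm.node 2 [ta, a, tb]] [UTerm.node 2 [ta, b, tb]]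
        have := Step8.context (u := [ta]) (v := [tb]) hab
        simpa using Step8.under (f := 2) this
      refine lift.tail ?_
      have := Step8.context (u := [ta]) (v := [tb])
        (Step8.rule (List.replicate n ta ++ List.replicate n tb))
      have h2 := Step8.under (f := 2) this
      have e : ([ta] ++ (List.replicate n ta ++ List.replicate n tb) ++ [tb]) =
          List.replicate (n+1) ta ++ List.replicate (n+1) tb := by
        rw [List.replicate_succ, List.replicate_succ' (n := n)]; simp
      have e2 : ([ta] ++ [UTerm.node 2 (List.replicate n ta ++ List.replicate n tb)] ++ [tb]) =
          [ta, UTerm.node 2 (List.replicate n ta ++ List.replicate n tb), tb] := by simp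
      rw [e2, e] at h2
      exact h2

theorem part1 :
    (Post8 ∩
        { u : UTerm (Fin 3) | ∃ ts : List (UTerm (Fin 3)), u = UTerm.node 2 ts ∧
            ∀ s ∈ ts, s = UTerm.node 0 [] ∨ s = UTerm.node 1 [] } =
      { u : UTerm (Fin 3) | ∃ n : ℕ, u =
          UTerm.node 2 (List.replicate n (UTerm.node 0 []) ++
            List.replicate n (UTerm.node 1 [])) }) := by
  ext u
  constructor
  · rintro ⟨hp, ts, rfl, hab⟩
    obtain ⟨n, rfl⟩ := bal_ab (bal_children (post_bal hp)) hab
    exact ⟨n, rfl⟩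
  · rintro ⟨n, rfl⟩
    refine ⟨reach n, _, rfl, ?_⟩
    intro s hs
    simp only [List.mem_append, List.mem_replicate] at hs
    rcases hs with ⟨-, rfl⟩ | ⟨-, rfl⟩ <;> simp


def label : UTerm (Fin 3) → Fin 3
  | UTerm.node f _ => f

lemma zip_replicate' {α β : Type*} (x : α) (w : List β) :
    (List.replicate w.length x).zip w = w.map (fun q => (x, q)) := by
  induction w with
  | nil => simp
  | cons b w ih => simpa [List.replicate_succ] using ih

lemma rep_rep_inj {p n m : ℕ}
    (h : (List.replicate p ta ++ List.replicate n tb : List (UTerm (Fin 3))) =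
      List.replicate m ta ++ List.replicate m tb) : p = m ∧ n = m := by
  have hl := congrArg (List.map label) h
  simp only [List.map_append, List.map_replicate] at hl
  have h1 := congrArg (List.count (1 : Fin 3)) hl
  have h0 := congrArg (List.count (0 : Fin 3)) hl
  simp [List.count_append, List.count_replicate, label] at h0 h1
  omega

theorem part2 : ¬ IsHALang Post8 := by
  rintro ⟨Q, _, A, hA⟩
  have hrun : ∀ n : ℕ, ∃ r : {r // r ∈ A.trans}, ∃ qs : List Q,
      qs ∈ r.1.2.1 ∧ (List.replicate n ta ++ List.replicate n tb).length = qs.length ∧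
      r.1.1 = 2 ∧ r.1.2.2 ∈ A.final ∧
      (∀ p ∈ (List.replicate n ta ++ List.replicate n tb).zip qs, A.Reduce p.1 p.2) := by
    intro n
    have hmem : UTerm.node 2 (List.replicate n ta ++ List.replicate n tb) ∈ A.lang := by
      rw [hA]; exact reach n
    obtain ⟨q, hqf, hred⟩ := hmem
    cases hred with
    | node htr hqs hlen hpairs => exact ⟨⟨_, htr⟩, _, hqs, hlen, rfl, hqf, hpairs⟩
  haveI : Finite {r // r ∈ A.trans} := (List.finite_toSet A.trans).to_subtype
  obtain ⟨r, hinf⟩ := Finite.exists_infinite_fiber (fun n => (hrun n).choose)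
  obtain ⟨σ, _, M, hM⟩ := A.regular r.1 r.2
  have hinf' : ((fun n => (hrun n).choose) ⁻¹' {r}).Infinite := Set.infinite_coe_iff.mp hinf
  obtain ⟨n, hn, hkn⟩ := hinf'.exists_gt (Fintype.card σ)
  have hfn : (hrun n).choose = r := hn
  obtain ⟨qs, hqs, hlen, hhead, hfinal, hpairs⟩ := (hrun n).choose_spec
  rw [hfn] at hqs hhead hfinal
  simp only [List.length_append, List.length_replicate] at hlen
  have hqsM : qs ∈ M.accepts := by rw [hM]; exact hqs
  obtain ⟨x, y, z, hxyz, hxylen, hyne, hsub⟩ := M.pumping_lemma hqsM (by omega)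
  set j := x.length + y.length with hj
  have hjn : j ≤ n := by omega
  have hqlen : x.length + y.length + z.length = n + n := by
    have := congrArg List.length hxyz; simp at this; omega
  -- pumped word is accepted
  have hyy : (y ++ y : List Q) ∈ KStar.kstar ({y} : Language Q) := by
    refine Language.mem_kstar.mpr ⟨[y, y], by simp, ?_⟩
    intro w hw
    simp only [List.mem_cons, List.not_mem_nil, or_false] at hw
    rcases hw with rfl | rfl <;> exact rfl
  have hpump : x ++ (y ++ y) ++ z ∈ M.accepts := by
    apply hsub
    show _ ∈ ({x} * KStar.kstar {y} * {z} : Language Q)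
    rw [Language.mem_mul]
    exact ⟨x ++ (y ++ y), Language.mem_mul.mpr ⟨x, rfl, y ++ y, hyy, rfl⟩, z, rfl, by simp⟩
  -- all states in x ++ y are reachable from ta
  have hxy_len : (x ++ y).length = j := by simp [hj]
  have hzipdec : (List.replicate n ta ++ List.replicate n tb).zip qs =
      (List.replicate j ta).zip (x ++ y) ++
        (List.replicate (n - j) ta ++ List.replicate n tb).zip z := by
    have e1 : (List.replicate n ta ++ List.replicate n tb : List (UTerm (Fin 3))) =
        List.replicate j ta ++ (List.replicate (n - j) ta ++ List.replicate n tb) := by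
      rw [← List.append_assoc, ← List.replicate_add, Nat.add_sub_cancel' hjn]
    have e2 : qs = (x ++ y) ++ z := hxyz
    rw [e1, e2, List.zip_append (by simp [hxy_len, hj])]
  have hA1 : ∀ q ∈ x ++ y, A.Reduce ta q := by
    intro q hq
    have hmem : (ta, q) ∈ (List.replicate j ta).zip (x ++ y) := by
      rw [← hxy_len, zip_replicate']
      exact List.mem_map.mpr ⟨q, hq, rfl⟩
    exact hpairs _ (by rw [hzipdec]; exact List.mem_append_left _ hmem)
  -- the pumped term
  have hred' : A.Reduce (UTerm.node 2 (List.replicate (n + y.length) ta ++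
      List.replicate n tb)) r.1.2.2 := by
    have htr2 : ((2 : Fin 3), r.1.2.1, r.1.2.2) ∈ A.trans := by
      rw [← hhead]; exact r.2
    refine HA.Reduce.node htr2 (by rw [← hM]; exact hpump) ?_ ?_
    · simp; omega
    · have ets : (List.replicate (n + y.length) ta ++ List.replicate n tb
          : List (UTerm (Fin 3))) =
          List.replicate j ta ++ (List.replicate y.length ta ++
            (List.replicate (n - j) ta ++ List.replicate n tb)) := by
        simp only [← List.append_assoc, ← List.replicate_add]
        congr 2; omega
      have eqs : (x ++ (y ++ y) ++ z : List Q) = (x ++ y) ++ (y ++ (z : List Q)) := by simp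
      rw [ets, eqs, List.zip_append (by simp [hxy_len, hj]),
        List.zip_append (by simp)]
      intro p hp
      rcases List.mem_append.mp hp with hp1 | hp2
      · rw [← hxy_len, zip_replicate'] at hp1
        obtain ⟨q, hq, rfl⟩ := List.mem_map.mp hp1
        exact hA1 q hq
      · rcases List.mem_append.mp hp2 with hp3 | hp4
        · have : (List.replicate y.length ta).zip y = y.map (fun q => (ta, q)) :=
            zip_replicate' ta y
          rw [this] at hp3
          obtain ⟨q, hq, rfl⟩ := List.mem_map.mp hp3
          exact hA1 q (List.mem_append_right _ hq)
        · exact hpairs _ (by rw [hzipdec]; exact List.mem_append_right _ hp4)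
  -- contradiction via part1
  have hpost : UTerm.node 2 (List.replicate (n + y.length) ta ++
      List.replicate n tb) ∈ Post8 := by
    rw [← hA]; exact ⟨r.1.2.2, hfinal, hred'⟩
  have hchar := Set.ext_iff.mp part1 (UTerm.node 2 (List.replicate (n + y.length) ta ++
      List.replicate n tb))
  have hrhs := hchar.mp ⟨hpost, _, rfl, by
    intro s hs
    simp only [List.mem_append, List.mem_replicate] at hs
    rcases hs with ⟨-, rfl⟩ | ⟨-, rfl⟩ <;> simp⟩
  obtain ⟨m, hm⟩ := hrhs
  injection hm with h1 h2
  obtain ⟨ha', hb'⟩ := rep_rep_inj h2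
  have : y.length = 0 := by omega
  exact hyne (List.length_eq_zero_iff.mp this)

end Aux8

/-- `post*(L) ∩ { c(w) | w ∈ {a,b}* } = { c(aⁿbⁿ) | n ≥ 0 }`, and
consequently `post*(L)` is not a hedge-automaton language. -/

theorem post_star_nested_not_ha :
    (Post8 ∩
        { u : UTerm (Fin 3) | ∃ ts : List (UTerm (Fin 3)), u = UTerm.node 2 ts ∧
            ∀ s ∈ ts, s = UTerm.node 0 [] ∨ s = UTerm.node 1 [] } =
      { u : UTerm (Fin 3) | ∃ n : ℕ, u =
          UTerm.node 2 (List.replicate n (UTerm.node 0 []) ++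
            List.replicate n (UTerm.node 1 [])) }) ∧
    ¬ IsHALang Post8 :=
  ⟨Aux8.part1, Aux8.part2⟩
end

section
/- The one-step successor set of a single term under an XACU+ parametrized rewrite system is a hedge-automaton language: for every HA A, PTRS R/A in XACU+, and ground term t, the set { u ∈ T(Σ) | t →_{R/A} u } is recognizable by a hedge automaton. -/
/-- XACU+ update rules parametrized by states of an HA `A`: renaming
`a(x) → b(x)`, (renaming) insertions `a(x) → b(p x)`, `a(x) → b(x p)`,
`a(xy) → a(x p y)`, `a(x) → p a(x)`, `a(x) → a(x) p`, generalized replacement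
`a(x) → p₁…pₙ` (subsuming replacement `n = 1` and deletion `n = 0`), and
single-node deletion `a(x) → x`. -/
inductive XPRule (α Q : Type)
  | ren (a b : α)
  | insFirst (a b : α) (p : Q)
  | insLast (a b : α) (p : Q)
  | insInto (a : α) (p : Q)
  | insLeft (a : α) (p : Q)
  | insRight (a : α) (p : Q)
  | rpl (a : α) (ps : List Q)
  | delS (a : α)

/-- Top-level application of one XACU+ rule, parameters `p` instantiated by
arbitrary terms of `L(A, p)`. -/
inductive XPStep {α Q : Type} (A : HA α Q) :
    XPRule α Q → List (UTerm α) → List (UTerm α) → Prop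
  | ren {a b h} : XPStep A (.ren a b) [UTerm.node a h] [UTerm.node b h]
  | insFirst {a b p t h} : A.Reduce t p →
      XPStep A (.insFirst a b p) [UTerm.node a h] [UTerm.node b (t :: h)]
  | insLast {a b p t h} : A.Reduce t p →
      XPStep A (.insLast a b p) [UTerm.node a h] [UTerm.node b (h ++ [t])]
  | insInto {a p t x y} : A.Reduce t p →
      XPStep A (.insInto a p) [UTerm.node a (x ++ y)] [UTerm.node a (x ++ t :: y)]
  | insLeft {a p t h} : A.Reduce t p →
      XPStep A (.insLeft a p) [UTerm.node a h] [t, UTerm.node a h]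
  | insRight {a p t h} : A.Reduce t p →
      XPStep A (.insRight a p) [UTerm.node a h] [UTerm.node a h, t]
  | rpl {a ps ts h} : ts.length = List.length ps →
      (∀ pr ∈ List.zip ts ps, A.Reduce pr.1 pr.2) →
      XPStep A (.rpl a ps) [UTerm.node a h] ts
  | delS {a h} : XPStep A (.delS a) [UTerm.node a h] h

/-- One rewrite step of a set of XACU+ rules at an arbitrary position. -/
inductive XPRw {α Q : Type} (A : HA α Q) (R : List (XPRule α Q)) :
    List (UTerm α) → List (UTerm α) → Prop
  | base {r h h'} : r ∈ R → XPStep A r h h' → XPRw A R h h'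
  | context {u v h h'} : XPRw A R h h' → XPRw A R (u ++ h ++ v) (u ++ h' ++ v)
  | under {f h h'} : XPRw A R h h' → XPRw A R [UTerm.node f h] [UTerm.node f h']

/-- Forward reachability set (on terms) under XACU+ rewriting. -/
def XPPost {α Q : Type} (A : HA α Q) (R : List (XPRule α Q))
    (L : Set (UTerm α)) : Set (UTerm α) :=
  { u | ∃ t ∈ L, Relation.ReflTransGen (fun x y => XPRw A R [x] [y]) t u }

/-- Backward reachability set (on terms) under XACU+ rewriting. -/
def XPPre {α Q : Type} (A : HA α Q) (R : List (XPRule α Q))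
    (L : Set (UTerm α)) : Set (UTerm α) :=
  { t | ∃ u ∈ L, Relation.ReflTransGen (fun x y => XPRw A R [x] [y]) t u }

namespace XacuAux

open List

variable {α P : Type}

/-! ### Generic list lemmas -/

theorem forall₂_imp_mem {γ δ : Type} {R S : γ → δ → Prop} {l : List γ} {u : List δ}
    (h : List.Forall₂ R l u) (him : ∀ a ∈ l, ∀ b, R a b → S a b) : List.Forall₂ S l u := by
  induction h with
  | nil => exact .nil
  | cons h1 _ ih =>
    exact .cons (him _ (by simp) _ h1) (ih fun a ha b hb => him a (by simp [ha]) b hb)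

theorem forall₂_append_split {γ δ : Type} {R : γ → δ → Prop} :
    ∀ {l₁ l₂ : List γ} {u : List δ}, List.Forall₂ R (l₁ ++ l₂) u →
      ∃ u₁ u₂, u = u₁ ++ u₂ ∧ List.Forall₂ R l₁ u₁ ∧ List.Forall₂ R l₂ u₂ := by
  intro l₁
  induction l₁ with
  | nil => exact fun h => ⟨[], _, rfl, .nil, h⟩
  | cons a l ih =>
    intro l₂ u h
    rw [List.cons_append, List.forall₂_cons_left_iff] at h
    obtain ⟨b, u', hab, h', rfl⟩ := h
    obtain ⟨u₁, u₂, rfl, hl, hr⟩ := ih h'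
    exact ⟨b :: u₁, u₂, rfl, .cons hab hl, hr⟩

theorem forall₂_append {γ δ : Type} {R : γ → δ → Prop} {l₁ l₂ : List γ} {u₁ u₂ : List δ}
    (h₁ : List.Forall₂ R l₁ u₁) (h₂ : List.Forall₂ R l₂ u₂) :
    List.Forall₂ R (l₁ ++ l₂) (u₁ ++ u₂) := by
  induction h₁ with
  | nil => exact h₂
  | cons h _ ih => exact .cons h ih

theorem forall₂_eq_right {γ : Type} {l u : List γ}
    (h : List.Forall₂ (fun a b => b = a) l u) : u = l := by
  induction h with
  | nil => rfl
  | cons h1 _ ih => simp [h1, ih]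

theorem mem_zip_swap {γ δ : Type} {l₁ : List γ} {l₂ : List δ} {a b}
    (h : (a, b) ∈ List.zip l₁ l₂) : (b, a) ∈ List.zip l₂ l₁ := by
  rw [← List.zip_swap]
  exact List.mem_map_of_mem (f := Prod.swap) h

/-! ### Terms, patterns, instances -/

/-- Induction principle for `UTerm` with membership hypotheses. -/
theorem UTerm.indOn {motive : UTerm α → Prop}
    (ind : ∀ a ts, (∀ t ∈ ts, motive t) → motive (.node a ts)) : ∀ t, motive t
  | .node a ts => ind a ts (fun t ht => UTerm.indOn ind t)
decreasing_by
  have := List.sizeOf_lt_of_mem ht; simp +arith [UTerm.node.sizeOf_spec]; omega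

/-- Embedding of ground terms into patterns. -/
def emb : UTerm α → UTerm (α ⊕ P)
  | .node a ts => .node (.inl a) (ts.attach.map fun x => emb x.1)
decreasing_by
  have := List.sizeOf_lt_of_mem x.2; simp +arith [UTerm.node.sizeOf_spec]; omega

theorem emb_def (a : α) (ts : List (UTerm α)) :
    (emb (.node a ts) : UTerm (α ⊕ P)) = .node (.inl a) (ts.map emb) := by
  conv_lhs => rw [emb]
  simp

/-- The parameter pattern. -/
def pp (p : P) : UTerm (α ⊕ P) := .node (.inr p) []

/-- Instantiation of a pattern: parameter leaves are replaced by arbitrary terms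
reducing (in `A`) to the corresponding state. -/
inductive PInst (A : HA α P) : UTerm (α ⊕ P) → UTerm α → Prop
  | param {p t} : A.Reduce t p → PInst A (.node (.inr p) []) t
  | lit {a ks ts} : List.Forall₂ (PInst A) ks ts → PInst A (.node (.inl a) ks) (.node a ts)

variable {A : HA α P}

theorem pinst_pp_iff {p : P} {u : UTerm α} : PInst A (pp p) u ↔ A.Reduce u p := by
  constructor
  · intro h; cases h with | param h => exact h
  · exact fun h => .param h

theorem pinst_emb_self : ∀ t : UTerm α, PInst A (emb t) t := by
  intro t
  induction t using UTerm.indOn with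
  | ind a ts ih =>
    rw [emb_def]
    exact PInst.lit (List.forall₂_map_left_iff.2 (List.forall₂_same.2 ih))

theorem forall₂_emb_self (h : List (UTerm α)) : List.Forall₂ (PInst A) (h.map emb) h :=
  List.forall₂_map_left_iff.2 (List.forall₂_same.2 fun t _ => pinst_emb_self t)

theorem eq_of_pinst_emb : ∀ (t : UTerm α) (u : UTerm α), PInst A (emb t) u → u = t := by
  intro t
  induction t using UTerm.indOn with
  | ind a ts ih =>
    intro u h
    rw [emb_def] at h
    cases h with
    | lit hf =>
      rw [List.forall₂_map_left_iff] at hf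
      have := forall₂_imp_mem hf (fun k hk b hb => ih k hk b hb)
      rw [forall₂_eq_right this]

theorem forall₂_emb_eq {h h' : List (UTerm α)}
    (hf : List.Forall₂ (PInst A) (h.map emb) h') : h' = h := by
  rw [List.forall₂_map_left_iff] at hf
  exact forall₂_eq_right (forall₂_imp_mem hf fun k _ b hb => eq_of_pinst_emb k b hb)

end XacuAux
namespace XacuAux

open List

variable {α P : Type} {A : HA α P}

/-! ### Patterns generated by one rule application -/

/-- All splittings of a list into two parts. -/
def splits : List (UTerm α) → List (List (UTerm α) × List (UTerm α))
  | [] => [([], [])]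
  | x :: xs => ([], x :: xs) :: (splits xs).map fun pr => (x :: pr.1, pr.2)

theorem mem_splits : ∀ x y : List (UTerm α), (x, y) ∈ splits (x ++ y) := by
  intro x
  induction x with
  | nil => intro y; cases y <;> simp [splits]
  | cons a l ih =>
    intro y
    rw [List.cons_append, splits]
    exact List.mem_cons_of_mem _ (List.mem_map.2 ⟨(l, y), ih y, rfl⟩)

theorem splits_eq : ∀ (g : List (UTerm α)) (pr), pr ∈ splits g → pr.1 ++ pr.2 = g := by
  intro g
  induction g with
  | nil => simp [splits]
  | cons a l ih =>
    intro pr hpr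
    rw [splits, List.mem_cons] at hpr
    rcases hpr with rfl | hpr
    · rfl
    · obtain ⟨pr', hpr', rfl⟩ := List.mem_map.1 hpr
      simp [ih pr' hpr']

open Classical in
/-- The right-hand-side patterns of one rule applied at the root of `a(g)`. -/
noncomputable def rulePats (a : α) (g : List (UTerm α)) :
    XPRule α P → List (List (UTerm (α ⊕ P)))
  | .ren a' b => if a' = a then [[.node (.inl b) (g.map emb)]] else []
  | .insFirst a' b p => if a' = a then [[.node (.inl b) (pp p :: g.map emb)]] else []
  | .insLast a' b p => if a' = a then [[.node (.inl b) (g.map emb ++ [pp p])]] else []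
  | .insInto a' p => if a' = a then
      (splits g).map (fun pr => [UTerm.node (.inl a) (pr.1.map emb ++ pp p :: pr.2.map emb)])
    else []
  | .insLeft a' p => if a' = a then [[pp p, .node (.inl a) (g.map emb)]] else []
  | .insRight a' p => if a' = a then [[.node (.inl a) (g.map emb), pp p]] else []
  | .rpl a' ps => if a' = a then [ps.map pp] else []
  | .delS a' => if a' = a then [g.map emb] else []

theorem step_to_pats {r : XPRule α P} {l h' : List (UTerm α)} (hs : XPStep A r l h') :
    ∃ a g, l = [UTerm.node a g] ∧ ∃ π ∈ rulePats a g r, List.Forall₂ (PInst A) π h' := by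
  cases hs with
  | @ren a b h =>
    exact ⟨a, h, rfl, _, by simp [rulePats],
      .cons (.lit (forall₂_emb_self h)) .nil⟩
  | @insFirst a b p t h ht =>
    exact ⟨a, h, rfl, _, by simp [rulePats],
      .cons (.lit (.cons (pinst_pp_iff.2 ht) (forall₂_emb_self h))) .nil⟩
  | @insLast a b p t h ht =>
    exact ⟨a, h, rfl, _, by simp [rulePats],
      .cons (.lit (forall₂_append (forall₂_emb_self h) (.cons (pinst_pp_iff.2 ht) .nil))) .nil⟩
  | @insInto a p t x y ht =>
    refine ⟨a, x ++ y, rfl, [UTerm.node (.inl a) (x.map emb ++ pp p :: y.map emb)], ?_,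
      .cons (.lit (forall₂_append (forall₂_emb_self x)
        (.cons (pinst_pp_iff.2 ht) (forall₂_emb_self y)))) .nil⟩
    rw [rulePats, if_pos rfl]
    exact List.mem_map.2 ⟨(x, y), mem_splits x y, rfl⟩
  | @insLeft a p t h ht =>
    exact ⟨a, h, rfl, _, by simp [rulePats],
      .cons (pinst_pp_iff.2 ht) (.cons (.lit (forall₂_emb_self h)) .nil)⟩
  | @insRight a p t h ht =>
    exact ⟨a, h, rfl, _, by simp [rulePats],
      .cons (.lit (forall₂_emb_self h)) (.cons (pinst_pp_iff.2 ht) .nil)⟩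
  | @rpl a ps ts h hlen hred =>
    refine ⟨a, h, rfl, ps.map pp, by simp [rulePats], ?_⟩
    rw [List.forall₂_map_left_iff, List.forall₂_iff_zip]
    refine ⟨by simp [hlen], ?_⟩
    intro p t hpt
    exact pinst_pp_iff.2 (hred (t, p) (mem_zip_swap hpt))
  | @delS a hh =>
    exact ⟨a, h', rfl, _, by simp [rulePats], forall₂_emb_self h'⟩

theorem pats_to_step {r : XPRule α P} {a : α} {g : List (UTerm α)} {π} {h' : List (UTerm α)}
    (hπ : π ∈ rulePats a g r) (hi : List.Forall₂ (PInst A) π h') :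
    XPStep A r [UTerm.node a g] h' := by
  cases r with
  | ren a' b =>
    rw [rulePats] at hπ
    split at hπ <;> simp_all
    subst hπ
    rw [List.forall₂_cons_left_iff] at hi
    obtain ⟨u, u', hu, hnil, rfl⟩ := hi
    rw [List.forall₂_nil_left_iff] at hnil; subst hnil
    cases hu with
    | lit hf => rw [forall₂_emb_eq hf]; exact .ren
  | insFirst a' b p =>
    rw [rulePats] at hπ
    split at hπ <;> simp_all
    subst hπ
    rw [List.forall₂_cons_left_iff] at hi
    obtain ⟨u, u', hu, hnil, rfl⟩ := hi
    rw [List.forall₂_nil_left_iff] at hnil; subst hnil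
    cases hu with
    | lit hf =>
      rw [List.forall₂_cons_left_iff] at hf
      obtain ⟨t0, ts', ht0, hts', rfl⟩ := hf
      rw [forall₂_emb_eq hts']
      exact .insFirst (pinst_pp_iff.1 ht0)
  | insLast a' b p =>
    rw [rulePats] at hπ
    split at hπ <;> simp_all
    subst hπ
    rw [List.forall₂_cons_left_iff] at hi
    obtain ⟨u, u', hu, hnil, rfl⟩ := hi
    rw [List.forall₂_nil_left_iff] at hnil; subst hnil
    cases hu with
    | lit hf =>
      obtain ⟨ts₁, ts₂, rfl, h₁, h₂⟩ := forall₂_append_split hf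
      rw [List.forall₂_cons_left_iff] at h₂
      obtain ⟨t0, ts', ht0, hnil', rfl⟩ := h₂
      rw [List.forall₂_nil_left_iff] at hnil'; subst hnil'
      rw [forall₂_emb_eq h₁]
      exact .insLast (pinst_pp_iff.1 ht0)
  | insInto a' p =>
    rw [rulePats] at hπ
    split at hπ
    · next heq =>
      subst heq
      obtain ⟨⟨x, y⟩, hxy, rfl⟩ := List.mem_map.1 hπ
      have hg : x ++ y = g := splits_eq g (x, y) hxy
      rw [List.forall₂_cons_left_iff] at hi
      obtain ⟨u, u', hu, hnil, rfl⟩ := hi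
      rw [List.forall₂_nil_left_iff] at hnil; subst hnil
      cases hu with
      | lit hf =>
        obtain ⟨ts₁, ts₂, rfl, h₁, h₂⟩ := forall₂_append_split hf
        rw [List.forall₂_cons_left_iff] at h₂
        obtain ⟨t0, ts', ht0, hts', rfl⟩ := h₂
        rw [forall₂_emb_eq h₁, forall₂_emb_eq hts']
        rw [← hg]
        exact .insInto (pinst_pp_iff.1 ht0)
    · simp at hπ
  | insLeft a' p =>
    rw [rulePats] at hπ
    split at hπ <;> simp_all
    subst hπ
    rw [List.forall₂_cons_left_iff] at hi
    obtain ⟨t0, u', ht0, hi', rfl⟩ := hi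
    rw [List.forall₂_cons_left_iff] at hi'
    obtain ⟨u, u'', hu, hnil, rfl⟩ := hi'
    rw [List.forall₂_nil_left_iff] at hnil; subst hnil
    cases hu with
    | lit hf =>
      rw [forall₂_emb_eq hf]
      exact .insLeft (pinst_pp_iff.1 ht0)
  | insRight a' p =>
    rw [rulePats] at hπ
    split at hπ <;> simp_all
    subst hπ
    rw [List.forall₂_cons_left_iff] at hi
    obtain ⟨u, u', hu, hi', rfl⟩ := hi
    rw [List.forall₂_cons_left_iff] at hi'
    obtain ⟨t0, u'', ht0, hnil, rfl⟩ := hi'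
    rw [List.forall₂_nil_left_iff] at hnil; subst hnil
    cases hu with
    | lit hf =>
      rw [forall₂_emb_eq hf]
      exact .insRight (pinst_pp_iff.1 ht0)
  | rpl a' ps =>
    rw [rulePats] at hπ
    split at hπ <;> simp_all
    have hi' : List.Forall₂ (fun p t => A.Reduce t p) ps h' :=
      forall₂_imp_mem hi fun p _ t ht => pinst_pp_iff.1 ht
    have hflip : List.Forall₂ (fun t p => A.Reduce t p) h' ps := List.Forall₂.flip hi'
    exact .rpl (hflip.length_eq) (fun pr hpr => List.forall₂_zip hflip (by exact hpr))
  | delS a' =>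
    rw [rulePats] at hπ
    split at hπ <;> simp_all
    have : h' = g :=
      forall₂_eq_right (forall₂_imp_mem hi fun k _ b hb => eq_of_pinst_emb k b hb)
    subst this
    exact .delS

end XacuAux
namespace XacuAux

open List

variable {α P : Type} {A : HA α P}

/-- All hedge patterns describing the possible results of one rewrite step
inside a hedge. -/
noncomputable def hsucc (R : List (XPRule α P)) : List (UTerm α) → List (List (UTerm (α ⊕ P)))
  | [] => []
  | (UTerm.node a g) :: v =>
      ((R.flatMap (rulePats a g) ++ (hsucc R g).map fun π => [UTerm.node (Sum.inl a) π]).map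
        fun π => π ++ v.map emb)
      ++ (hsucc R v).map fun π => emb (UTerm.node a g) :: π
termination_by l => sizeOf l
decreasing_by all_goals simp +arith [UTerm.node.sizeOf_spec] <;> omega

theorem hsucc_append_right {R : List (XPRule α P)} :
    ∀ (m v π h'), π ∈ hsucc R m → List.Forall₂ (PInst A) π h' →
      ∃ π' ∈ hsucc R (m ++ v), List.Forall₂ (PInst A) π' (h' ++ v)
  | [], v, π, h', hπ, _ => by simp [hsucc] at hπ
  | (UTerm.node a g) :: rest, v, π, h', hπ, hins => by
    rw [hsucc] at hπ
    rcases List.mem_append.1 hπ with hπ | hπ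
    · obtain ⟨σ, hσ, rfl⟩ := List.mem_map.1 hπ
      obtain ⟨h₁, h₂, rfl, hi₁, hi₂⟩ := forall₂_append_split hins
      have hh₂ : h₂ = rest := forall₂_emb_eq hi₂
      subst hh₂
      refine ⟨σ ++ (h₂ ++ v).map emb, ?_, ?_⟩
      · rw [List.cons_append, hsucc]
        exact List.mem_append_left _ (List.mem_map.2 ⟨σ, hσ, rfl⟩)
      · rw [List.append_assoc]
        exact forall₂_append hi₁ (forall₂_emb_self (h₂ ++ v))
    · obtain ⟨ρ, hρ, rfl⟩ := List.mem_map.1 hπ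
      rw [List.forall₂_cons_left_iff] at hins
      obtain ⟨u, h₂, hu, hρi, rfl⟩ := hins
      have hus : u = UTerm.node a g := eq_of_pinst_emb _ _ hu
      subst hus
      obtain ⟨ρ', hρ', hρi'⟩ := hsucc_append_right rest v ρ h₂ hρ hρi
      refine ⟨emb (UTerm.node a g) :: ρ', ?_, .cons (pinst_emb_self _) hρi'⟩
      rw [List.cons_append, hsucc]
      exact List.mem_append_right _ (List.mem_map.2 ⟨ρ', hρ', rfl⟩)
termination_by m => sizeOf m
decreasing_by simp +arith [UTerm.node.sizeOf_spec] <;> omega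

theorem hsucc_cons_left {R : List (XPRule α P)} {s : UTerm α} {m π h'}
    (hπ : π ∈ hsucc R m) (hins : List.Forall₂ (PInst A) π h') :
    ∃ π' ∈ hsucc R (s :: m), List.Forall₂ (PInst A) π' (s :: h') := by
  obtain ⟨a, g⟩ := s
  refine ⟨emb (UTerm.node a g) :: π, ?_, .cons (pinst_emb_self _) hins⟩
  rw [hsucc]
  exact List.mem_append_right _ (List.mem_map.2 ⟨π, hπ, rfl⟩)

theorem hsucc_append_left {R : List (XPRule α P)} :
    ∀ (u : List (UTerm α)) {m π h'}, π ∈ hsucc R m → List.Forall₂ (PInst A) π h' →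
      ∃ π' ∈ hsucc R (u ++ m), List.Forall₂ (PInst A) π' (u ++ h') := by
  intro u
  induction u with
  | nil => exact fun hπ hins => ⟨_, hπ, hins⟩
  | cons s u ih =>
    intro m π h' hπ hins
    obtain ⟨π', hπ', hins'⟩ := ih hπ hins
    exact hsucc_cons_left hπ' hins'

theorem xprw_to_pats {R : List (XPRule α P)} {h h' : List (UTerm α)} (hrw : XPRw A R h h') :
    ∃ π ∈ hsucc R h, List.Forall₂ (PInst A) π h' := by
  induction hrw with
  | base hr hs =>
    obtain ⟨a, g, rfl, π, hπ, hins⟩ := step_to_pats hs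
    refine ⟨π ++ ([] : List (UTerm α)).map emb, ?_, by simpa using hins⟩
    rw [hsucc]
    exact List.mem_append_left _
      (List.mem_map.2 ⟨π, List.mem_append_left _ (List.mem_flatMap.2 ⟨_, hr, hπ⟩), rfl⟩)
  | @context u v m m' _ ih =>
    obtain ⟨π, hπ, hins⟩ := ih
    obtain ⟨π', hπ', hins'⟩ := hsucc_append_right m v π m' hπ hins
    have := hsucc_append_left u hπ' hins'
    simpa [List.append_assoc] using this
  | @under f m m' _ ih =>
    obtain ⟨π, hπ, hins⟩ := ih
    refine ⟨[UTerm.node (Sum.inl f) π] ++ ([] : List (UTerm α)).map emb, ?_, ?_⟩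
    · rw [hsucc]
      exact List.mem_append_left _
        (List.mem_map.2 ⟨_, List.mem_append_right _ (List.mem_map.2 ⟨π, hπ, rfl⟩), rfl⟩)
    · simpa using List.Forall₂.cons (PInst.lit hins) List.Forall₂.nil

theorem pats_to_xprw {R : List (XPRule α P)} :
    ∀ (h π h'), π ∈ hsucc R h → List.Forall₂ (PInst A) π h' →
      XPRw A R h h'
  | [], π, h', hπ, _ => by simp [hsucc] at hπ
  | (UTerm.node a g) :: v, π, h', hπ, hins => by
    rw [hsucc] at hπ
    rcases List.mem_append.1 hπ with hπ | hπ
    · obtain ⟨σ, hσ, rfl⟩ := List.mem_map.1 hπ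
      obtain ⟨h₁, h₂, rfl, hi₁, hi₂⟩ := forall₂_append_split hins
      have hh₂ : h₂ = v := forall₂_emb_eq hi₂
      subst hh₂
      rcases List.mem_append.1 hσ with hσ | hσ
      · obtain ⟨r, hrR, hrp⟩ := List.mem_flatMap.1 hσ
        have hstep := pats_to_step hrp hi₁
        have := XPRw.context (u := []) (v := h₂) (XPRw.base hrR hstep)
        simpa using this
      · obtain ⟨ρ, hρ, rfl⟩ := List.mem_map.1 hσ
        rw [List.forall₂_cons_left_iff] at hi₁
        obtain ⟨u, u', hu, hnil, rfl⟩ := hi₁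
        rw [List.forall₂_nil_left_iff] at hnil; subst hnil
        cases hu with
        | lit hf =>
          have hrec := pats_to_xprw g ρ _ hρ hf
          have := XPRw.context (u := []) (v := h₂) (XPRw.under (f := a) hrec)
          simpa using this
    · obtain ⟨ρ, hρ, rfl⟩ := List.mem_map.1 hπ
      rw [List.forall₂_cons_left_iff] at hins
      obtain ⟨u, h₂, hu, hρi, rfl⟩ := hins
      have hus : u = UTerm.node a g := eq_of_pinst_emb _ _ hu
      subst hus
      have hrec := pats_to_xprw v ρ h₂ hρ hρi
      have := XPRw.context (u := [UTerm.node a g]) (v := []) hrec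
      simpa using this
termination_by h => sizeOf h
decreasing_by all_goals simp +arith [UTerm.node.sizeOf_spec] <;> omega

theorem xprw_singleton_iff {R : List (XPRule α P)} {t u : UTerm α} :
    XPRw A R [t] [u] ↔ ∃ σ, [σ] ∈ hsucc R [t] ∧ PInst A σ u := by
  constructor
  · intro h
    obtain ⟨π, hπ, hins⟩ := xprw_to_pats h
    rw [List.forall₂_cons_right_iff] at hins
    obtain ⟨σ, π', hσ, hnil, rfl⟩ := hins
    rw [List.forall₂_nil_right_iff] at hnil; subst hnil
    exact ⟨σ, hπ, hσ⟩
  · rintro ⟨σ, h1, h2⟩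
    exact pats_to_xprw _ _ _ h1 (.cons h2 .nil)

end XacuAux
namespace XacuAux

open List

variable {α P : Type}

/-! ### Regularity of the word languages used by the pattern automaton -/

open Classical in
/-- The image of a regular language under `List.map Sum.inl` is regular. -/
theorem regular_mapInl {P β : Type} {L : Language P} (hL : L.IsRegular) :
    Language.IsRegular {w : List (P ⊕ β) | ∃ v ∈ L, w = v.map Sum.inl} := by
  obtain ⟨σ, _, M, rfl⟩ := hL
  refine ⟨Option σ, inferInstance, ⟨fun s x => match s, x with
    | some s, .inl p => some (M.step s p)
    | _, _ => none, some M.start, {s | ∃ s' ∈ M.accept, s = some s'}⟩, ?_⟩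
  set N : DFA (P ⊕ β) (Option σ) := ⟨fun s x => match s, x with
    | some s, .inl p => some (M.step s p)
    | _, _ => none, some M.start, {s | ∃ s' ∈ M.accept, s = some s'}⟩ with hN
  have hnone : ∀ w, N.evalFrom none w = none := by
    intro w; induction w with
    | nil => rfl
    | cons x w ih => simpa [DFA.evalFrom, hN] using ih
  have hinl : ∀ v (s : σ), N.evalFrom (some s) (v.map Sum.inl) = some (M.evalFrom s v) := by
    intro v; induction v with
    | nil => intro s; rfl
    | cons p v ih => intro s; simpa [DFA.evalFrom, hN] using ih (M.step s p)
  have hconv : ∀ w (s : σ), N.evalFrom (some s) w ∈ N.accept →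
      ∃ v, w = v.map Sum.inl ∧ M.evalFrom s v ∈ M.accept := by
    intro w; induction w with
    | nil =>
      intro s hs
      obtain ⟨s', hs', h⟩ := hs
      exact ⟨[], rfl, by simpa [DFA.evalFrom] using (Option.some_injective _ h.symm ▸ hs' : _)⟩
    | cons x w ih =>
      intro s hs
      match x with
      | .inl p =>
        have : N.evalFrom (some (M.step s p)) w ∈ N.accept := by
          simpa [DFA.evalFrom, hN] using hs
        obtain ⟨v, rfl, hv⟩ := ih (M.step s p) this
        exact ⟨p :: v, rfl, by simpa [DFA.evalFrom] using hv⟩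
      | .inr b =>
        exfalso
        have : N.evalFrom none w ∈ N.accept := by simpa [DFA.evalFrom, hN] using hs
        rw [hnone] at this
        obtain ⟨s', _, h⟩ := this
        cases h
  ext w
  simp only [DFA.mem_accepts, Set.mem_setOf_eq]
  constructor
  · intro h
    obtain ⟨v, rfl, hv⟩ := hconv w M.start h
    exact ⟨v, hv, rfl⟩
  · rintro ⟨v, hv, rfl⟩
    show N.evalFrom (some M.start) _ ∈ N.accept
    rw [hinl]
    exact ⟨_, hv, rfl⟩

open Classical in
/-- The language of words matching a fixed list of "letter specifications" is regular. -/
theorem regular_match {γ δ : Type} (ks : List γ) (Rel : γ → δ → Prop) :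
    Language.IsRegular {qs : List δ | List.Forall₂ Rel ks qs} := by
  set m := ks.length with hm
  set stepf : Option (Fin (m + 1)) → δ → Option (Fin (m + 1)) := fun s q =>
    match s with
    | none => none
    | some i => if h : (i : ℕ) < m then
        (if Rel (ks.get ⟨i, h⟩) q then some ⟨(i : ℕ) + 1, by omega⟩ else none)
      else none with hstepf
  refine ⟨Option (Fin (m + 1)), inferInstance,
    ⟨stepf, some ⟨0, Nat.succ_pos m⟩, {s | s = some ⟨m, Nat.lt_succ_self m⟩}⟩, ?_⟩
  set N : DFA δ (Option (Fin (m + 1))) :=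
    ⟨stepf, some ⟨0, Nat.succ_pos m⟩, {s | s = some ⟨m, Nat.lt_succ_self m⟩}⟩ with hN
  have hnone : ∀ w, N.evalFrom none w = none := by
    intro w; induction w with
    | nil => rfl
    | cons x w ih => simpa [DFA.evalFrom, hN, hstepf] using ih
  have key : ∀ qs (j : ℕ) (hj : j ≤ m),
      (N.evalFrom (some ⟨j, by omega⟩) qs ∈ N.accept ↔ List.Forall₂ Rel (ks.drop j) qs) := by
    intro qs
    induction qs with
    | nil =>
      intro j hj
      simp only [DFA.evalFrom, List.foldl_nil, hN]
      constructor
      · intro h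
        have : j = m := by simpa [Option.some_inj, Fin.ext_iff] using h
        subst this
        simp [List.drop_eq_nil_iff, hm.symm.le]
      · intro h
        have := List.Forall₂.length_eq h
        simp at this
        have : j = m := by omega
        subst this
        simp [Set.mem_setOf_eq]
    | cons q qs ih =>
      intro j hj
      have hev : N.evalFrom (some ⟨j, by omega⟩) (q :: qs) =
          N.evalFrom (stepf (some ⟨j, by omega⟩) q) qs := by
        simp [DFA.evalFrom, hN]
      by_cases hjm : j < m
      · have hdrop : ks.drop j = ks[j] :: ks.drop (j + 1) :=
          List.drop_eq_getElem_cons (l := ks) (by omega)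
        have hget : ks.get ⟨j, hjm⟩ = ks[j] := rfl
        by_cases hrel : Rel (ks[j]'hjm) q
        · have hs : stepf (some ⟨j, by omega⟩) q = some ⟨j + 1, by omega⟩ := by
            simp [hstepf, hjm, hget, hrel]
          rw [hev, hs, ih (j + 1) (by omega), hdrop, List.forall₂_cons]
          simp [hrel]
        · have hs : stepf (some ⟨j, by omega⟩) q = none := by
            simp [hstepf, hjm, hget, hrel]
          rw [hev, hs, hnone, hdrop, List.forall₂_cons]
          simp [hrel, hN]
      · have hs : stepf (some ⟨j, by omega⟩) q = none := by
          simp [hstepf, hjm]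
        have hdrop : ks.drop j = [] := by
          rw [List.drop_eq_nil_iff]; omega
        rw [hev, hs, hnone, hdrop]
        simp [hN]
  ext qs
  rw [DFA.mem_accepts]
  have := key qs 0 (Nat.zero_le m)
  change _ ↔ List.Forall₂ Rel ks qs
  simpa [DFA.eval, hN] using this

/-! ### An automaton recognizing a finite union of pattern languages -/

/-- All subterm occurrences of a list of patterns. -/
def subsH : List (UTerm (α ⊕ P)) → List (UTerm (α ⊕ P))
  | [] => []
  | (UTerm.node x ks) :: rest => UTerm.node x ks :: (subsH ks ++ subsH rest)
termination_by l => sizeOf l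
decreasing_by all_goals simp +arith [UTerm.node.sizeOf_spec] <;> omega

theorem mem_subsH_self : ∀ (l : List (UTerm (α ⊕ P))) (σ), σ ∈ l → σ ∈ subsH l
  | [], σ, h => by simp at h
  | (UTerm.node x ks) :: rest, σ, h => by
    rw [subsH]
    rcases List.mem_cons.1 h with rfl | h
    · exact List.mem_cons_self
    · exact List.mem_cons_of_mem _ (List.mem_append_right _ (mem_subsH_self rest σ h))
termination_by l => sizeOf l
decreasing_by simp +arith [UTerm.node.sizeOf_spec] <;> omega

theorem subsH_closed : ∀ (l : List (UTerm (α ⊕ P))) (x ks k),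
    UTerm.node x ks ∈ subsH l → k ∈ ks → k ∈ subsH l
  | [], x, ks, k, h, _ => by simp [subsH] at h
  | (UTerm.node y ms) :: rest, x, ks, k, h, hk => by
    rw [subsH] at h ⊢
    rcases List.mem_cons.1 h with heq | h
    · cases heq
      exact List.mem_cons_of_mem _ (List.mem_append_left _ (mem_subsH_self _ _ hk))
    · rcases List.mem_append.1 h with h | h
      · exact List.mem_cons_of_mem _
          (List.mem_append_left _ (subsH_closed ms x ks k h hk))
      · exact List.mem_cons_of_mem _
          (List.mem_append_right _ (subsH_closed rest x ks k h hk))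
termination_by l => sizeOf l
decreasing_by all_goals simp +arith [UTerm.node.sizeOf_spec] <;> omega

/-- Compatibility of a pattern with a state of the pattern automaton. -/
def StOk (subs : List (UTerm (α ⊕ P))) :
    UTerm (α ⊕ P) → (P ⊕ Fin subs.length) → Prop
  | UTerm.node (Sum.inr p) [], Sum.inl p' => p' = p
  | UTerm.node (Sum.inl a) ks, Sum.inr i => subs.get i = UTerm.node (Sum.inl a) ks
  | _, _ => False

/-- The transition generated by the `i`-th subpattern, if it is not a parameter. -/
def transOf (subs : List (UTerm (α ⊕ P))) (i : Fin subs.length) :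
    Option (α × Language (P ⊕ Fin subs.length) × (P ⊕ Fin subs.length)) :=
  match subs.get i with
  | UTerm.node (Sum.inl a) ks => some (a, {qs | List.Forall₂ (StOk subs) ks qs}, Sum.inr i)
  | _ => none

theorem transOf_eq_some {subs : List (UTerm (α ⊕ P))} {i} {tr}
    (h : transOf subs i = some tr) :
    ∃ a ks, subs.get i = UTerm.node (Sum.inl a) ks ∧
      tr = (a, {qs | List.Forall₂ (StOk subs) ks qs}, Sum.inr i) := by
  unfold transOf at h
  split at h
  · next a ks heq => exact ⟨a, ks, heq, (Option.some.inj h).symm⟩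
  · simp at h

theorem transOf_get_lit {subs : List (UTerm (α ⊕ P))} {i} {a ks}
    (h : subs.get i = UTerm.node (Sum.inl a) ks) :
    transOf subs i = some (a, {qs | List.Forall₂ (StOk subs) ks qs}, Sum.inr i) := by
  unfold transOf
  rw [h]
  rfl

/-- The pattern automaton: lifted copies of the transitions of `A` plus one
transition per (non-parameter) subpattern occurrence. -/
noncomputable def patHA (A : HA α P) (pats : List (UTerm (α ⊕ P))) :
    HA α (P ⊕ Fin (subsH pats).length) where
  final := {q | ∃ σ ∈ pats, StOk (subsH pats) σ q}
  trans :=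
    (A.trans.map (fun r => (r.1,
      ({w | ∃ v ∈ r.2.1, w = v.map Sum.inl} :
        Language (P ⊕ Fin (subsH pats).length)), Sum.inl r.2.2)) :
      List (α × Language (P ⊕ Fin (subsH pats).length) × (P ⊕ Fin (subsH pats).length))) ++
    (List.finRange (subsH pats).length).filterMap (transOf (subsH pats))
  regular := by
    intro r hr
    rcases List.mem_append.1 hr with hr | hr
    · obtain ⟨r₀, hr₀, rfl⟩ := List.mem_map.1 hr
      exact regular_mapInl (A.regular r₀ hr₀)
    · obtain ⟨i, _, hi⟩ := List.mem_filterMap.1 hr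
      obtain ⟨a, ks, _, rfl⟩ := transOf_eq_some hi
      exact regular_match ks (StOk (subsH pats))

theorem patHA_trans_eq (A : HA α P) (pats : List (UTerm (α ⊕ P))) :
    (patHA A pats).trans =
      (A.trans.map (fun r => (r.1,
        ({w | ∃ v ∈ r.2.1, w = v.map Sum.inl} :
          Language (P ⊕ Fin (subsH pats).length)), Sum.inl r.2.2)) :
        List (α × Language (P ⊕ Fin (subsH pats).length) × (P ⊕ Fin (subsH pats).length))) ++
      (List.finRange (subsH pats).length).filterMap (transOf (subsH pats)) := rfl

theorem patHA_final_eq (A : HA α P) (pats : List (UTerm (α ⊕ P))) :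
    (patHA A pats).final = {q | ∃ σ ∈ pats, StOk (subsH pats) σ q} := rfl

/-- Selecting singleton hedges. -/
def sing {γ : Type} : List γ → Option γ
  | [σ] => some σ
  | _ => none

theorem sing_mem_filterMap' {γ : Type} (l : List (List γ)) (σ : γ) :
    σ ∈ l.filterMap sing ↔ [σ] ∈ l := by
  rw [List.mem_filterMap]
  constructor
  · rintro ⟨π, hπ, hm⟩
    rcases π with _ | ⟨x, _ | ⟨y, l'⟩⟩ <;> simp_all [sing]
  · intro h
    exact ⟨[σ], h, rfl⟩

variable {A : HA α P} {pats : List (UTerm (α ⊕ P))}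

theorem patHA_reduce_sound {u : UTerm α} {q} (h : (patHA A pats).Reduce u q) :
    (∀ p, q = Sum.inl p → A.Reduce u p) ∧
    (∀ i, q = Sum.inr i → PInst A ((subsH pats).get i) u) := by
  induction h with
  | @node a ts qs L q htr hqs hlen hred ih =>
    rw [patHA_trans_eq] at htr
    rcases List.mem_append.1 htr with htr | htr
    · obtain ⟨⟨a₀, L₀, q₀⟩, hr₀, heq⟩ := List.mem_map.1 htr
      simp only [Prod.mk.injEq] at heq
      obtain ⟨rfl, rfl, rfl⟩ := heq
      constructor
      · intro p hp
        injection hp with hpq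
        subst hpq
        obtain ⟨vs, hvs, rfl⟩ := hqs
        refine HA.Reduce.node hr₀ hvs (by simpa using hlen) ?_
        intro pr hpr
        have hmem : Prod.map id (Sum.inl : P → P ⊕ Fin (subsH pats).length) pr ∈
            List.zip ts (vs.map Sum.inl) := by
          rw [List.zip_map_right]
          exact List.mem_map_of_mem hpr
        exact (ih _ hmem).1 pr.2 rfl
      · intro i hi
        simp at hi
    · obtain ⟨i, _, hti⟩ := List.mem_filterMap.1 htr
      obtain ⟨a', ks, hget, heq⟩ := transOf_eq_some hti
      replace heq : a = a' ∧ L = {qs | List.Forall₂ (StOk (subsH pats)) ks qs} ∧ q = Sum.inr i := by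
        injection heq with h1 h2; injection h2 with h3 h4; exact ⟨h1, h3, h4⟩
      obtain ⟨rfl, rfl, rfl⟩ := heq
      constructor
      · intro p hp
        simp at hp
      · intro j hj
        injection hj with hij
        subst hij
        rw [hget]
        refine PInst.lit ?_
        have hlen₁ : ks.length = qs.length := hqs.length_eq
        refine List.forall₂_of_length_eq_of_get (by omega) ?_
        intro idx h₁ h₂
        have hq : idx < qs.length := by omega
        have hok := hqs.get h₁ hq
        have hzmem : (ts.get ⟨idx, h₂⟩, qs.get ⟨idx, hq⟩) ∈ List.zip ts qs := by
          have hz : idx < (List.zip ts qs).length := by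
            rw [List.length_zip]; omega
          have : (List.zip ts qs).get ⟨idx, hz⟩ =
              (ts.get ⟨idx, h₂⟩, qs.get ⟨idx, hq⟩) := by
            simp [List.getElem_zip]
          rw [← this]
          exact List.get_mem _ _
        have hmot := ih _ hzmem
        rcases hk : ks.get ⟨idx, h₁⟩ with ⟨x | p, ks'⟩
        · rcases hqv : qs.get ⟨idx, hq⟩ with p' | j
          · rw [hk, hqv] at hok
            simp [StOk] at hok
          · rw [hk, hqv] at hok
            simp only [StOk] at hok
            have := hmot.2 j (by rw [hqv])
            rw [hok] at this
            exact this
        · rcases ks' with _ | ⟨k₁, ks''⟩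
          · rcases hqv : qs.get ⟨idx, hq⟩ with p' | j
            · rw [hk, hqv] at hok
              simp only [StOk] at hok
              subst hok
              exact PInst.param (hmot.1 _ (by rw [hqv]))
            · rw [hk, hqv] at hok
              simp [StOk] at hok
          · rcases hqv : qs.get ⟨idx, hq⟩ with p' | j <;>
              rw [hk, hqv] at hok <;> simp [StOk] at hok

theorem reduce_to_patHA {u : UTerm α} {p : P} (h : A.Reduce u p) :
    (patHA A pats).Reduce u (Sum.inl p) := by
  induction h with
  | @node a ts qs L q htr hqs hlen hred ih =>
    refine HA.Reduce.node (L := {w | ∃ v ∈ L, w = v.map Sum.inl})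
      (by rw [patHA_trans_eq]
          exact List.mem_append_left _ (List.mem_map.2 ⟨(a, L, q), htr, rfl⟩))
      ⟨qs, hqs, rfl⟩ (by simpa using hlen) ?_
    intro pr hpr
    rw [List.zip_map_right] at hpr
    obtain ⟨⟨t, q'⟩, hmem, rfl⟩ := List.mem_map.1 hpr
    exact ih (t, q') hmem

theorem collect {Q' : Type} {C : UTerm α → Q' → Prop} {S : UTerm (α ⊕ P) → Q' → Prop} :
    ∀ {ks ts}, List.Forall₂ (PInst A) ks ts →
    (∀ k t, k ∈ ks → t ∈ ts → PInst A k t → ∃ q, S k q ∧ C t q) →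
    ∃ qs, List.Forall₂ S ks qs ∧ List.Forall₂ C ts qs := by
  intro ks ts h
  induction h with
  | nil => exact fun _ => ⟨[], .nil, .nil⟩
  | cons h1 h2 ih =>
    intro hcb
    obtain ⟨q, hS, hC⟩ := hcb _ _ (by simp) (by simp) h1
    obtain ⟨qs, hqs1, hqs2⟩ := ih (fun k t hk ht => hcb k t (by simp [hk]) (by simp [ht]))
    exact ⟨q :: qs, .cons hS hqs1, .cons hC hqs2⟩

theorem pinst_to_patHA : ∀ (u : UTerm α) (σ), PInst A σ u → σ ∈ subsH pats →
    ∃ q, StOk (subsH pats) σ q ∧ (patHA A pats).Reduce u q := by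
  intro u
  induction u using UTerm.indOn with
  | ind a ts ihm =>
    intro σ hinst hsub
    cases hinst with
    | @param p _ hred =>
      exact ⟨Sum.inl p, by simp [StOk], reduce_to_patHA hred⟩
    | @lit _ ks _ hf =>
      obtain ⟨i, hget⟩ := List.mem_iff_get.1 hsub
      have hkssub : ∀ k ∈ ks, k ∈ subsH pats := fun k hk =>
        subsH_closed pats _ ks k hsub hk
      obtain ⟨qs, hqs1, hqs2⟩ :=
        collect (C := fun t q => (patHA A pats).Reduce t q) hf
          (fun k t hk ht hkt => ihm t ht k hkt (hkssub k hk))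
      refine ⟨Sum.inr i, by simp only [StOk]; exact hget, ?_⟩
      refine HA.Reduce.node
        (L := {qs | List.Forall₂ (StOk (subsH pats)) ks qs})
        (by rw [patHA_trans_eq]
            exact List.mem_append_right _
              (List.mem_filterMap.2 ⟨i, List.mem_finRange i, transOf_get_lit hget⟩))
        hqs1 hqs2.length_eq ?_
      exact fun pr hpr => List.forall₂_zip hqs2 hpr

theorem patHA_lang : (patHA A pats).lang = {u | ∃ σ ∈ pats, PInst A σ u} := by
  ext u
  simp only [HA.lang, Set.mem_setOf_eq]
  constructor
  · rintro ⟨q, hqf, hred⟩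
    rw [patHA_final_eq] at hqf
    obtain ⟨σ, hσp, hok⟩ := hqf
    refine ⟨σ, hσp, ?_⟩
    have hs := patHA_reduce_sound hred
    rcases q with p | i
    · rcases σ with ⟨x | p', ks⟩
      · simp [StOk] at hok
      · rcases ks with _ | ⟨k, ks⟩
        · simp only [StOk] at hok
          subst hok
          exact PInst.param (hs.1 _ rfl)
        · simp [StOk] at hok
    · rcases σ with ⟨x | p', ks⟩
      · simp only [StOk] at hok
        have := hs.2 i rfl
        rwa [hok] at this
      · rcases ks with _ | ⟨k, ks⟩ <;> simp [StOk] at hok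
  · rintro ⟨σ, hσ, hinst⟩
    obtain ⟨q, hok, hred⟩ := pinst_to_patHA u σ hinst (mem_subsH_self pats σ hσ)
    exact ⟨q, by rw [patHA_final_eq]; exact ⟨σ, hσ, hok⟩, hred⟩

end XacuAux
/-- the one-step successor set of a single term under an XACU+
parametrized rewrite system is a hedge-automaton language. -/
theorem xacup_one_step_isHALang {α : Type} [Fintype α] {P : Type} [Fintype P]
    (A : HA α P) (R : List (XPRule α P)) (t : UTerm α) :
    IsHALang { u : UTerm α | XPRw A R [t] [u] } := by
  classical
  refine ⟨_, inferInstance,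
    XacuAux.patHA A ((XacuAux.hsucc R [t]).filterMap XacuAux.sing), ?_⟩
  rw [XacuAux.patHA_lang]
  ext u
  simp only [Set.mem_setOf_eq]
  rw [XacuAux.xprw_singleton_iff]
  constructor
  · rintro ⟨σ, hσ, hinst⟩
    exact ⟨σ, (XacuAux.sing_mem_filterMap' _ _).1 hσ, hinst⟩
  · rintro ⟨σ, hσ, hinst⟩
    exact ⟨σ, (XacuAux.sing_mem_filterMap' _ _).2 hσ, hinst⟩
end
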